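/- arXiv:1407.4228 — 3 statements merged into one kernel-verified Lean document; each statement's English description precedes it below -/
import Mathlib

section
/- Let λ, μ ∈ Λ_Δ(n,r), let y, d ∈ D^Δ_{λ,μ} with y ≤ d in the Bruhat order, and set B = J_Δ(λ,y,μ) and A = J_Δ(λ,d,μ). Then B ⊑ A; that is, σ_{i,j}(B) ≤ σ_{i,j}(A) for all i ≠ j, ro(B) = ro(A) and co(B) = co(A). -/
open scoped Classical

noncomputable section

/-- The extended affine symmetric group `𝔖_{Δ,r}`: permutations `w` of `ℤ`
with `w (i + r) = w i + r` for all `i`. -/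
def AffSym (r : ℕ) : Subgroup (Equiv.Perm ℤ) where
  carrier := {w | ∀ i : ℤ, w (i + r) = w i + r}
  one_mem' := fun _ => rfl
  mul_mem' := by
    intro a b ha hb i
    simp only [Equiv.Perm.mul_apply, hb i, ha (b i)]
  inv_mem' := by
    intro a ha i
    apply a.injective
    rw [ha (a⁻¹ i)]
    simp

/-- The underlying function of the affine transposition `(i,j)`. -/
def tFun (r : ℕ) (i j : ℤ) : ℤ → ℤ := fun k =>
  if (r : ℤ) ∣ (k - i) then j + (k - i)
  else if (r : ℤ) ∣ (k - j) then i + (k - j)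
  else k

theorem tFun_invol (r : ℕ) (i j : ℤ) (h : ¬ (r : ℤ) ∣ (j - i)) :
    Function.Involutive (tFun r i j) := by
  intro k
  by_cases h1 : (r : ℤ) ∣ (k - i)
  · have e1 : tFun r i j k = j + (k - i) := by simp only [tFun]; rw [if_pos h1]
    have h2 : ¬ (r : ℤ) ∣ (j + (k - i) - i) := by
      intro hd
      apply h
      have h5 := hd.sub h1
      have h6 : j + (k - i) - i - (k - i) = j - i := by ring
      rwa [h6] at h5
    have h3 : (r : ℤ) ∣ (j + (k - i) - j) := by simpa using h1
    rw [e1]; simp only [tFun]; rw [if_neg h2, if_pos h3]; ring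
  · by_cases h2 : (r : ℤ) ∣ (k - j)
    · have e1 : tFun r i j k = i + (k - j) := by
        simp only [tFun]; rw [if_neg h1, if_pos h2]
      have h3 : (r : ℤ) ∣ (i + (k - j) - i) := by simpa using h2
      rw [e1]; simp only [tFun]; rw [if_pos h3]; ring
    · have e1 : tFun r i j k = k := by simp only [tFun]; rw [if_neg h1, if_neg h2]
      rw [e1, e1]

/-- The affine transposition `(i,j) ∈ W_r` (defined to be `1` in the degenerate
case `i ≡ j (mod r)`). -/
def tPerm (r : ℕ) (i j : ℤ) : Equiv.Perm ℤ :=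
  if h : (r : ℤ) ∣ (j - i) then 1 else Function.Involutive.toPerm _ (tFun_invol r i j h)

/-- The set of Coxeter generators `s_1, …, s_r` of `W_r`. -/
def sGen (r : ℕ) : Set (Equiv.Perm ℤ) :=
  {w | ∃ i : ℤ, 1 ≤ i ∧ i ≤ (r : ℤ) ∧ w = tPerm r i (i + 1)}

/-- The affine Weyl group `W_r`, generated by `s_1, …, s_r`. -/
def WGrp (r : ℕ) : Subgroup (Equiv.Perm ℤ) := Subgroup.closure (sGen r)

/-- Length of an element of `W_r`: the minimal length of an expression
as a product of the generators `s_1, …, s_r`. -/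
def lenW (r : ℕ) (x : Equiv.Perm ℤ) : ℕ :=
  sInf {m | ∃ l : List (Equiv.Perm ℤ), l.length = m ∧ (∀ s ∈ l, s ∈ sGen r) ∧ l.prod = x}

/-- The shift permutation `ρ : j ↦ j + 1`. -/
def rhoP : Equiv.Perm ℤ := Equiv.addRight 1

/-- For `w = ρ^a x` with `x ∈ W_r`, recovers the exponent `a`. -/
def shiftIdx (r : ℕ) (w : Equiv.Perm ℤ) : ℤ :=
  (∑ i ∈ Finset.Icc (1 : ℤ) (r : ℤ), (w i - i)) / r

/-- Length on `𝔖_{Δ,r}`: writing `w = ρ^a x` with `x ∈ W_r`, `ℓ(w) = ℓ(x)`. -/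
def alen (r : ℕ) (w : Equiv.Perm ℤ) : ℕ :=
  lenW r ((rhoP ^ shiftIdx r w)⁻¹ * w)

/-- The set `T` of affine reflections `(i,j)`, `i < j`, `i ≢ j (mod r)`. -/
def TSet (r : ℕ) : Set (Equiv.Perm ℤ) :=
  {t | ∃ i j : ℤ, i < j ∧ ¬ (r : ℤ) ∣ (j - i) ∧ t = tPerm r i j}

/-- Bruhat order on `W_r`: `y ≤ w` iff `w = t_1 ⋯ t_m y` with all `t_i ∈ T` and
`ℓ(t_i ⋯ t_m y) > ℓ(t_{i+1} ⋯ t_m y)` for all `i`. -/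
def bruhatLE (r : ℕ) (y w : Equiv.Perm ℤ) : Prop :=
  ∃ l : List (Equiv.Perm ℤ), (∀ t ∈ l, t ∈ TSet r) ∧ w = l.prod * y ∧
    ∀ k, k < l.length →
      lenW r ((l.drop (k + 1)).prod * y) < lenW r ((l.drop k).prod * y)

/-- Bruhat order extended to `𝔖_{Δ,r}`: `ρ^a y ≤ ρ^b w` iff `a = b` and `y ≤ w`. -/
def abruhatLE (r : ℕ) (y w : Equiv.Perm ℤ) : Prop :=
  shiftIdx r y = shiftIdx r w ∧
    bruhatLE r ((rhoP ^ shiftIdx r y)⁻¹ * y) ((rhoP ^ shiftIdx r w)⁻¹ * w)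

/-- `Λ_Δ(n,r)`: `n`-periodic sequences of naturals summing to `r` over a period. -/
def LambdaSet (n r : ℕ) : Set (ℤ → ℕ) :=
  {lam | (∀ i : ℤ, lam i = lam (i - n)) ∧ ∑ i ∈ Finset.Icc (1 : ℤ) (n : ℤ), lam i = r}

/-- The interval `R^λ_m ⊆ ℤ`; for `m = i + kn` with `1 ≤ i ≤ n` this is
`{λ_{k,i-1}+1, …, λ_{k,i-1}+λ_i}` where `λ_{k,i-1} = kr + λ_1 + ⋯ + λ_{i-1}`. -/
def Rset (n r : ℕ) (lam : ℤ → ℕ) (m : ℤ) : Set ℤ :=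
  {a | ((m - 1) / n) * r + ∑ t ∈ Finset.Icc (1 : ℤ) ((m - 1) % n), (lam t : ℤ) < a ∧
       a ≤ ((m - 1) / n) * r + ∑ t ∈ Finset.Icc (1 : ℤ) ((m - 1) % n + 1), (lam t : ℤ)}

/-- The finite symmetric group `𝔖_r ⊆ W_r`, generated by `s_1, …, s_{r-1}`. -/
def SymFin (r : ℕ) : Subgroup (Equiv.Perm ℤ) :=
  Subgroup.closure {w | ∃ i : ℤ, 1 ≤ i ∧ i < (r : ℤ) ∧ w = tPerm r i (i + 1)}

/-- The Young subgroup `𝔖_λ`: elements of `𝔖_r` stabilizing each `R^λ_i`, `1 ≤ i ≤ n`. -/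
def YoungSet (n r : ℕ) (lam : ℤ → ℕ) : Set (Equiv.Perm ℤ) :=
  {w | w ∈ SymFin r ∧ ∀ i : ℤ, 1 ≤ i → i ≤ (n : ℤ) → w '' Rset n r lam i = Rset n r lam i}

/-- `D^Δ_λ`: distinguished right coset representatives. -/
def DRep (n r : ℕ) (lam : ℤ → ℕ) : Set (Equiv.Perm ℤ) :=
  {d | d ∈ AffSym r ∧ ∀ w ∈ YoungSet n r lam, alen r (w * d) = alen r w + alen r d}

/-- `D^Δ_{λ,μ} = D^Δ_λ ∩ (D^Δ_μ)⁻¹`. -/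
def DRep2 (n r : ℕ) (lam mu : ℤ → ℕ) : Set (Equiv.Perm ℤ) :=
  {d | d ∈ DRep n r lam ∧ d⁻¹ ∈ DRep n r mu}

/-- The matrix `J_Δ(λ,d,μ) = (|R^λ_k ∩ d(R^μ_l)|)_{k,l}`. -/
def JMat (n r : ℕ) (lam mu : ℤ → ℕ) (d : Equiv.Perm ℤ) : ℤ → ℤ → ℕ :=
  fun k l => (Rset n r lam k ∩ (d '' Rset n r mu l)).ncard

/-- `Θ_Δ(n)`: ℕ-matrices, `n`-periodic along the diagonal, with finite rows and columns. -/
def ThetaSet (n : ℕ) : Set (ℤ → ℤ → ℕ) :=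
  {A | (∀ i j : ℤ, A (i + n) (j + n) = A i j) ∧
       (∀ i : ℤ, {j : ℤ | A i j ≠ 0}.Finite) ∧
       (∀ j : ℤ, {i : ℤ | A i j ≠ 0}.Finite)}

/-- `σ(A) = Σ_{1 ≤ i ≤ n, j ∈ ℤ} a_{i,j}`. -/
def sigmaTot (n : ℕ) (A : ℤ → ℤ → ℕ) : ℕ :=
  ∑ᶠ j : ℤ, ∑ i ∈ Finset.Icc (1 : ℤ) (n : ℤ), A i j

/-- Row sums. -/
def roM (A : ℤ → ℤ → ℕ) : ℤ → ℕ := fun i => ∑ᶠ j : ℤ, A i j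

/-- Column sums. -/
def coM (A : ℤ → ℤ → ℕ) : ℤ → ℕ := fun j => ∑ᶠ i : ℤ, A i j

/-- `σ_{i,j}(A)`: for `i < j` the sum `Σ_{s ≤ i, t ≥ j} a_{s,t}`; for `i > j` the
sum `Σ_{s ≥ i, t ≤ j} a_{s,t}`. -/
def sigmaOrd (A : ℤ → ℤ → ℕ) (i j : ℤ) : ℕ :=
  if i < j then ∑ᶠ (p : ℤ × ℤ) (_ : p.1 ≤ i ∧ j ≤ p.2), A p.1 p.2
  else ∑ᶠ (p : ℤ × ℤ) (_ : i ≤ p.1 ∧ p.2 ≤ j), A p.1 p.2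

/-- The map `η_m : A ↦ (a_{i, mn+j})_{i,j}`. -/
def etaM (n : ℕ) (m : ℤ) (A : ℤ → ℤ → ℕ) : ℤ → ℤ → ℕ := fun i j => A i (m * n + j)

/-- The double coset `𝔖_λ d 𝔖_μ`. -/
def DCoset (n r : ℕ) (lam mu : ℤ → ℕ) (d : Equiv.Perm ℤ) : Set (Equiv.Perm ℤ) :=
  {w | ∃ u ∈ YoungSet n r lam, ∃ v ∈ YoungSet n r mu, w = u * d * v}

/-- `d_A = Σ a_{i,j} a_{k,l}` over `1 ≤ i ≤ n`, `k ≤ i`, `j < l`. -/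
def dWt (n : ℕ) (A : ℤ → ℤ → ℕ) : ℕ :=
  ∑ᶠ (q : (ℤ × ℤ) × ℤ × ℤ)
    (_ : 1 ≤ q.1.1 ∧ q.1.1 ≤ (n : ℤ) ∧ q.2.1 ≤ q.1.1 ∧ q.1.2 < q.2.2),
    A q.1.1 q.1.2 * A q.2.1 q.2.2

/-- The embedding `A ↦ Ã` from `Θ_Δ(n)` to `Θ_Δ(N)`. -/
def tildeM (n N : ℕ) (A : ℤ → ℤ → ℕ) : ℤ → ℤ → ℕ := fun k l =>
  let k0 : ℤ := (k - 1) % N + 1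
  let l' : ℤ := l - ((k - 1) / N) * N
  let l0 : ℤ := (l' - 1) % N + 1
  let m : ℤ := (l' - 1) / N
  if k0 ≤ n ∧ l0 ≤ n then A k0 (l0 + m * n) else 0

/-- `Θ̃_Δ(n)`: ℤ-matrices with nonnegative off-diagonal entries, `n`-periodic
along the diagonal, with finite rows and columns. -/
def ThetaTSet (n : ℕ) : Set (ℤ → ℤ → ℤ) :=
  {A | (∀ i j : ℤ, i ≠ j → 0 ≤ A i j) ∧ (∀ i j : ℤ, A (i + n) (j + n) = A i j) ∧
       (∀ i : ℤ, {j : ℤ | A i j ≠ 0}.Finite) ∧ (∀ j : ℤ, {i : ℤ | A i j ≠ 0}.Finite)}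

/-- Row sums (ℤ-entry version). -/
def roMZ (A : ℤ → ℤ → ℤ) : ℤ → ℤ := fun i => ∑ᶠ j : ℤ, A i j

/-- Column sums (ℤ-entry version). -/
def coMZ (A : ℤ → ℤ → ℤ) : ℤ → ℤ := fun j => ∑ᶠ i : ℤ, A i j

/-- `σ_{i,j}` (ℤ-entry version). -/
def sigmaOrdZ (A : ℤ → ℤ → ℤ) (i j : ℤ) : ℤ :=
  if i < j then ∑ᶠ (p : ℤ × ℤ) (_ : p.1 ≤ i ∧ j ≤ p.2), A p.1 p.2
  else ∑ᶠ (p : ℤ × ℤ) (_ : i ≤ p.1 ∧ p.2 ≤ j), A p.1 p.2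

/-- The relation `B ⊑ A` on `Θ̃_Δ(n)`. -/
def sqLE (B A : ℤ → ℤ → ℤ) : Prop :=
  (∀ i j : ℤ, i ≠ j → sigmaOrdZ B i j ≤ sigmaOrdZ A i j) ∧ roMZ B = roMZ A ∧ coMZ B = coMZ A

/-- The vector `v_a ∈ V = 𝔽[ε,ε⁻¹]^r`: for `a = i + kr` with `1 ≤ i ≤ r`,
`v_a = ε^{-k} v_i` where `v_1, …, v_r` is the standard basis. -/
def vb (F : Type*) [Field F] (r : ℕ) (a : ℤ) : Fin r → LaurentPolynomial F :=
  if h : 0 < r then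
    Pi.single ⟨((a - 1) % (r : ℤ)).toNat, by
      have h1 : (0 : ℤ) < (r : ℤ) := by exact_mod_cast h
      have h2 : 0 ≤ (a - 1) % (r : ℤ) := Int.emod_nonneg _ (by omega)
      have h3 : (a - 1) % (r : ℤ) < (r : ℤ) := Int.emod_lt_of_pos _ h1
      omega⟩
      (LaurentPolynomial.T (-((a - 1) / (r : ℤ))))
  else 0

/-- The bound `Σ_{1 ≤ j ≤ i} λ_j + kr` for `m = i + kn`, `1 ≤ i ≤ n`. -/
def bnd (n r : ℕ) (lam : ℤ → ℕ) (m : ℤ) : ℤ :=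
  ((m - 1) / n) * r + ∑ t ∈ Finset.Icc (1 : ℤ) ((m - 1) % n + 1), (lam t : ℤ)

/-- The lattice-filtration subspace `L_m = span_𝔽{v_a | a ≤ Σ_{1≤j≤i} λ_j + kr}`. -/
def Lsub (F : Type*) [Field F] (n r : ℕ) (lam : ℤ → ℕ) (m : ℤ) :
    Submodule F (Fin r → LaurentPolynomial F) :=
  Submodule.span F {x | ∃ a : ℤ, a ≤ bnd n r lam m ∧ x = vb F r a}

/-- The subspace `L'_m = span_𝔽{v_{d(a)} | a ≤ Σ_{1≤j≤i} μ_j + kr}`. -/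
def Lsub' (F : Type*) [Field F] (n r : ℕ) (mu : ℤ → ℕ) (d : Equiv.Perm ℤ) (m : ℤ) :
    Submodule F (Fin r → LaurentPolynomial F) :=
  Submodule.span F {x | ∃ a : ℤ, a ≤ bnd n r mu m ∧ x = vb F r (d a)}
end


theorem Equiv.Perm.apply_inv_self {α : Type*} (f : Equiv.Perm α) (x : α) : f (f⁻¹ x) = x :=
  f.apply_symm_apply x

theorem Equiv.Perm.inv_apply_self {α : Type*} (f : Equiv.Perm α) (x : α) : f⁻¹ (f x) = x :=
  f.symm_apply_apply x

namespace JAux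
open Set

/-- Affineness predicate. -/
def Aff (r : ℕ) (w : Equiv.Perm ℤ) : Prop := ∀ i : ℤ, w (i + r) = w i + r

theorem aff_add_mul {r : ℕ} {w : Equiv.Perm ℤ} (hw : Aff r w) (x : ℤ) (m : ℤ) :
    w (x + m * r) = w x + m * r := by
  induction m using Int.induction_on with
  | zero => simp
  | succ k ih =>
      have : x + (k + 1 : ℤ) * r = (x + k * r) + r := by ring
      rw [this, hw, ih]; ring
  | pred k ih =>
      have h1 : x + (-(k:ℤ) - 1) * r + r = x + (-(k:ℤ)) * r := by ring
      have := hw (x + (-(k:ℤ) - 1) * r)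
      rw [h1] at this
      rw [ih] at this
      have h2 : w (x + (-(k:ℤ) - 1) * r) = w x + -(k:ℤ) * r - r := by omega
      rw [h2]; ring

theorem aff_one {r : ℕ} : Aff r (1 : Equiv.Perm ℤ) := fun _ => rfl

theorem aff_mul {r : ℕ} {u v : Equiv.Perm ℤ} (hu : Aff r u) (hv : Aff r v) :
    Aff r (u * v) := by
  intro i
  simp only [Equiv.Perm.mul_apply, hv i, hu (v i)]

theorem aff_inv {r : ℕ} {u : Equiv.Perm ℤ} (hu : Aff r u) : Aff r u⁻¹ := by
  intro i
  apply u.injective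
  rw [hu (u⁻¹ i)]
  simp

theorem dvd_shift {r : ℕ} {x : ℤ} : (r:ℤ) ∣ (x + r) ↔ (r:ℤ) ∣ x := by
  constructor
  · intro h; have := h.sub (dvd_refl (r:ℤ)); simpa using this
  · intro h; exact h.add (dvd_refl _)

theorem aff_tPerm {r : ℕ} (i j : ℤ) : Aff r (tPerm r i j) := by
  intro k
  unfold tPerm
  split
  · rfl
  · show tFun r i j (k + r) = tFun r i j k + r
    unfold tFun
    have h1 : k + (r:ℤ) - i = (k - i) + r := by ring
    have h2 : k + (r:ℤ) - j = (k - j) + r := by ring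
    rw [h1, h2]
    by_cases d1 : (r:ℤ) ∣ (k - i)
    · rw [if_pos (dvd_shift.2 d1), if_pos d1]; ring
    · rw [if_neg (fun hc => d1 (dvd_shift.1 hc)), if_neg d1]
      by_cases d2 : (r:ℤ) ∣ (k - j)
      · rw [if_pos (dvd_shift.2 d2), if_pos d2]; ring
      · rw [if_neg (fun hc => d2 (dvd_shift.1 hc)), if_neg d2]

theorem tPerm_apply₁ {r : ℕ} {i j k : ℤ} (hnd : ¬ (r:ℤ) ∣ (j - i))
    (h : (r:ℤ) ∣ (k - i)) : tPerm r i j k = j + (k - i) := by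
  unfold tPerm
  rw [dif_neg hnd]
  show tFun r i j k = _
  unfold tFun
  rw [if_pos h]

theorem tPerm_apply₂ {r : ℕ} {i j k : ℤ} (hnd : ¬ (r:ℤ) ∣ (j - i))
    (h : (r:ℤ) ∣ (k - j)) : tPerm r i j k = i + (k - j) := by
  unfold tPerm
  rw [dif_neg hnd]
  show tFun r i j k = _
  unfold tFun
  have h1 : ¬ (r:ℤ) ∣ (k - i) := by
    intro hc
    have h2 : (r:ℤ) ∣ (k - i - (k - j)) := hc.sub h
    have h3 : k - i - (k - j) = j - i := by ring
    rw [h3] at h2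
    exact hnd h2
  rw [if_neg h1, if_pos h]

theorem tPerm_apply₃ {r : ℕ} {i j k : ℤ} (hnd : ¬ (r:ℤ) ∣ (j - i))
    (h1 : ¬ (r:ℤ) ∣ (k - i)) (h2 : ¬ (r:ℤ) ∣ (k - j)) : tPerm r i j k = k := by
  unfold tPerm
  rw [dif_neg hnd]
  show tFun r i j k = _
  unfold tFun
  rw [if_neg h1, if_neg h2]

theorem tPerm_inv {r : ℕ} (i j : ℤ) : (tPerm r i j)⁻¹ = tPerm r i j := by
  unfold tPerm
  split
  · simp
  · rfl

theorem aff_class {r : ℕ} {w : Equiv.Perm ℤ} (hw : Aff r w) {p k : ℤ}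
    (h : (r:ℤ) ∣ (k - p)) : w k = w p + (k - p) := by
  obtain ⟨m, hm⟩ := h
  have hk : k = p + m * r := by linarith [hm]
  rw [hk, aff_add_mul hw]
  have : p + m * (r:ℤ) - p = m * r := by ring
  rw [this]

theorem periodic_shift {r : ℕ} {f : ℤ → ℤ} (hf : ∀ x, f (x + r) = f x) (x m : ℤ) :
    f (x + m * r) = f x := by
  induction m using Int.induction_on with
  | zero => simp
  | succ k ih =>
      have : x + ((k:ℤ) + 1) * r = (x + k * r) + r := by ring
      rw [this, hf, ih]
  | pred k ih =>
      have h1 : (x + (-(k:ℤ) - 1) * r) + r = x + (-(k:ℤ)) * r := by ring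
      have := hf (x + (-(k:ℤ) - 1) * r)
      rw [h1] at this
      rw [← this, ih]

theorem periodic_eq_window {r : ℕ} (hr : 1 ≤ r) {f : ℤ → ℤ} (hf : ∀ x, f (x + r) = f x)
    (k : ℤ) : f k = f (((k - 1) % r) + 1) ∧
      (((k - 1) % r) + 1) ∈ Finset.Icc (1:ℤ) (r:ℤ) := by
  have hr' : (0:ℤ) < r := by exact_mod_cast hr
  have hmod : 0 ≤ (k - 1) % r := Int.emod_nonneg _ (by omega)
  have hmod2 : (k - 1) % r < r := Int.emod_lt_of_pos _ hr'
  have hdm := Int.mul_ediv_add_emod (k - 1) r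
  have hk : k = (((k - 1) % r) + 1) + ((k - 1) / r) * r := by linarith
  constructor
  · conv_lhs => rw [hk]
    rw [periodic_shift hf]
  · simp only [Finset.mem_Icc]; omega

theorem periodic_lb {r : ℕ} (hr : 1 ≤ r) {f : ℤ → ℤ} (hf : ∀ x, f (x + r) = f x) :
    ∃ C, ∀ k, C ≤ f k := by
  have hne : (Finset.Icc (1:ℤ) (r:ℤ)).Nonempty := ⟨1, by simp; exact_mod_cast hr⟩
  refine ⟨(Finset.Icc (1:ℤ) (r:ℤ)).inf' hne f, fun k => ?_⟩
  obtain ⟨heq, hmem⟩ := periodic_eq_window hr hf k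
  rw [heq]
  exact Finset.inf'_le _ hmem

theorem periodic_ub {r : ℕ} (hr : 1 ≤ r) {f : ℤ → ℤ} (hf : ∀ x, f (x + r) = f x) :
    ∃ C, ∀ k, f k ≤ C := by
  obtain ⟨C, hC⟩ := periodic_lb hr (f := fun x => - f x) (fun x => by simp [hf x])
  exact ⟨-C, fun k => by have := hC k; omega⟩

theorem aff_sub_periodic {r : ℕ} {w : Equiv.Perm ℤ} (hw : Aff r w) :
    ∀ x : ℤ, w (x + r) - (x + r) = w x - x := fun x => by rw [hw x]; ring

/-- `{k | N < k ∧ w k ≤ M}`. -/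
def Xset (w : Equiv.Perm ℤ) (M N : ℤ) : Set ℤ := {k | N < k ∧ w k ≤ M}

/-- `{k | k ≤ N ∧ M < w k}`. -/
def Xset' (w : Equiv.Perm ℤ) (M N : ℤ) : Set ℤ := {k | k ≤ N ∧ M < w k}

theorem Xset_finite {r : ℕ} (hr : 1 ≤ r) {w : Equiv.Perm ℤ} (hw : Aff r w) (M N : ℤ) :
    (Xset w M N).Finite := by
  obtain ⟨C, hC⟩ := periodic_lb hr (f := fun x => w x - x) (aff_sub_periodic hw)
  apply Set.Finite.subset (Set.finite_Ioc N (M - C))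
  rintro k ⟨h1, h2⟩
  exact ⟨h1, by have := hC k; omega⟩

theorem Xset'_finite {r : ℕ} (hr : 1 ≤ r) {w : Equiv.Perm ℤ} (hw : Aff r w) (M N : ℤ) :
    (Xset' w M N).Finite := by
  obtain ⟨C, hC⟩ := periodic_ub hr (f := fun x => w x - x) (aff_sub_periodic hw)
  apply Set.Finite.subset (Set.finite_Ioc (M - C) N)
  rintro k ⟨h1, h2⟩
  exact ⟨by have := hC k; omega, h1⟩

theorem class_not_dvd {r : ℕ} {w : Equiv.Perm ℤ} (hw : Aff r w) {p q : ℤ}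
    (hnd : ¬ (r:ℤ) ∣ (w q - w p)) : ¬ (r:ℤ) ∣ (q - p) := by
  intro hc
  exact hnd (by rw [aff_class hw hc]; simpa using hc)

theorem val_class {r : ℕ} {w : Equiv.Perm ℤ} (hw : Aff r w) {p k x : ℤ}
    (hx : (r:ℤ) ∣ (x - w p)) (hk : ¬ (r:ℤ) ∣ (k - p)) : ¬ (r:ℤ) ∣ (w k - x) := by
  intro hc
  have h2 : (r:ℤ) ∣ (w k - w p) := by
    have := hc.add hx
    have he : w k - x + (x - w p) = w k - w p := by ring
    rwa [he] at this
  obtain ⟨m, hm⟩ := h2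
  have : w k = w (p + m * r) := by rw [aff_add_mul hw]; linarith
  have hkp : k = p + m * r := w.injective this
  exact hk ⟨m, by rw [hkp]; ring⟩

theorem step_cnt {r : ℕ} (hr : 1 ≤ r) {w : Equiv.Perm ℤ} (hw : Aff r w)
    {a b : ℤ} (hab : a < b) (hnd : ¬ (r:ℤ) ∣ (b - a))
    (hpq : w⁻¹ a < w⁻¹ b) (M N : ℤ) :
    (Xset w M N).ncard ≤ (Xset (tPerm r a b * w) M N).ncard := by
  set p := w⁻¹ a with hp
  set q := w⁻¹ b with hq
  have hwp : w p = a := w.apply_inv_self a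
  have hwq : w q = b := w.apply_inv_self b
  have hndpq : ¬ (r:ℤ) ∣ (q - p) := by
    apply class_not_dvd hw
    rw [hwp, hwq]; exact hnd
  have htw : Aff r (tPerm r a b * w) := aff_mul (aff_tPerm a b) hw
  -- value computations
  have hvp : ∀ k : ℤ, (r:ℤ) ∣ (k - p) → w k = a + (k - p) ∧
      (tPerm r a b * w) k = b + (k - p) := by
    intro k hk
    have h1 : w k = a + (k - p) := by rw [aff_class hw hk, hwp]
    refine ⟨h1, ?_⟩
    have h2 : (r:ℤ) ∣ (w k - a) := by rw [h1]; simpa using hk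
    rw [Equiv.Perm.mul_apply, tPerm_apply₁ hnd h2, h1]
    ring
  have hvq : ∀ k : ℤ, (r:ℤ) ∣ (k - q) → w k = b + (k - q) ∧
      (tPerm r a b * w) k = a + (k - q) := by
    intro k hk
    have h1 : w k = b + (k - q) := by rw [aff_class hw hk, hwq]
    refine ⟨h1, ?_⟩
    have h2 : (r:ℤ) ∣ (w k - b) := by rw [h1]; simpa using hk
    rw [Equiv.Perm.mul_apply, tPerm_apply₂ hnd h2, h1]
    ring
  have hvo : ∀ k : ℤ, ¬ (r:ℤ) ∣ (k - p) → ¬ (r:ℤ) ∣ (k - q) →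
      (tPerm r a b * w) k = w k := by
    intro k h1 h2
    rw [Equiv.Perm.mul_apply]
    exact tPerm_apply₃ hnd
      (val_class hw (by rw [hwp]; simp) h1) (val_class hw (by rw [hwq]; simp) h2)
  -- the injection
  set φ : ℤ → ℤ := fun k => if (r:ℤ) ∣ (k - p) ∧ M < b + (k - p) then k + (q - p) else k
    with hφ
  refine Set.ncard_le_ncard_of_injOn φ ?_ ?_ (Xset_finite hr htw M N)
  · -- maps to
    rintro k ⟨hk1, hk2⟩
    by_cases hc : (r:ℤ) ∣ (k - p) ∧ M < b + (k - p)
    · have hφk : φ k = k + (q - p) := if_pos hc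
      rw [hφk]
      obtain ⟨hd, hM⟩ := hc
      have hd2 : (r:ℤ) ∣ (k + (q - p) - q) := by
        have : k + (q - p) - q = k - p := by ring
        rw [this]; exact hd
      obtain ⟨_, h2⟩ := hvq (k + (q - p)) hd2
      constructor
      · show N < k + (q - p); omega
      · show (tPerm r a b * w) (k + (q-p)) ≤ M
        rw [h2]
        have : k + (q - p) - q = k - p := by ring
        rw [this]
        have := (hvp k hd).1
        omega
    · have hφk : φ k = k := if_neg hc
      rw [hφk]
      refine ⟨hk1, ?_⟩
      by_cases hd : (r:ℤ) ∣ (k - p)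
      · have hM : ¬ M < b + (k - p) := fun h => hc ⟨hd, h⟩
        rw [(hvp k hd).2]; omega
      · by_cases hd2 : (r:ℤ) ∣ (k - q)
        · obtain ⟨h1, h2⟩ := hvq k hd2
          rw [h2]; rw [h1] at hk2; omega
        · rw [hvo k hd hd2]; exact hk2
  · -- injective
    rintro k1 ⟨_, hk12⟩ k2 ⟨_, hk22⟩ heq
    by_cases h1 : (r:ℤ) ∣ (k1 - p) ∧ M < b + (k1 - p) <;>
      by_cases h2 : (r:ℤ) ∣ (k2 - p) ∧ M < b + (k2 - p)
    · rw [hφ] at heq; simp only [if_pos h1, if_pos h2] at heq; omega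
    · rw [hφ] at heq; simp only [if_pos h1, if_neg h2] at heq
      -- k1 + (q-p) = k2, k2 is in class q
      exfalso
      have hd2 : (r:ℤ) ∣ (k2 - q) := by
        have : k2 - q = k1 - p := by omega
        rw [this]; exact h1.1
      have := (hvq k2 hd2).1
      rw [this] at hk22
      have : k2 - q = k1 - p := by omega
      omega
    · rw [hφ] at heq; simp only [if_neg h1, if_pos h2] at heq
      exfalso
      have hd1 : (r:ℤ) ∣ (k1 - q) := by
        have : k1 - q = k2 - p := by omega
        rw [this]; exact h2.1
      have := (hvq k1 hd1).1
      rw [this] at hk12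
      have : k1 - q = k2 - p := by omega
      omega
    · rw [hφ] at heq; simp only [if_neg h1, if_neg h2] at heq; exact heq

theorem step_cnt' {r : ℕ} (hr : 1 ≤ r) {w : Equiv.Perm ℤ} (hw : Aff r w)
    {a b : ℤ} (hab : a < b) (hnd : ¬ (r:ℤ) ∣ (b - a))
    (hpq : w⁻¹ a < w⁻¹ b) (M N : ℤ) :
    (Xset' w M N).ncard ≤ (Xset' (tPerm r a b * w) M N).ncard := by
  set p := w⁻¹ a with hp
  set q := w⁻¹ b with hq
  have hwp : w p = a := w.apply_inv_self a
  have hwq : w q = b := w.apply_inv_self b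
  have hndpq : ¬ (r:ℤ) ∣ (q - p) := by
    apply class_not_dvd hw
    rw [hwp, hwq]; exact hnd
  have htw : Aff r (tPerm r a b * w) := aff_mul (aff_tPerm a b) hw
  have hvp : ∀ k : ℤ, (r:ℤ) ∣ (k - p) → w k = a + (k - p) ∧
      (tPerm r a b * w) k = b + (k - p) := by
    intro k hk
    have h1 : w k = a + (k - p) := by rw [aff_class hw hk, hwp]
    refine ⟨h1, ?_⟩
    have h2 : (r:ℤ) ∣ (w k - a) := by rw [h1]; simpa using hk
    rw [Equiv.Perm.mul_apply, tPerm_apply₁ hnd h2, h1]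
    ring
  have hvq : ∀ k : ℤ, (r:ℤ) ∣ (k - q) → w k = b + (k - q) ∧
      (tPerm r a b * w) k = a + (k - q) := by
    intro k hk
    have h1 : w k = b + (k - q) := by rw [aff_class hw hk, hwq]
    refine ⟨h1, ?_⟩
    have h2 : (r:ℤ) ∣ (w k - b) := by rw [h1]; simpa using hk
    rw [Equiv.Perm.mul_apply, tPerm_apply₂ hnd h2, h1]
    ring
  have hvo : ∀ k : ℤ, ¬ (r:ℤ) ∣ (k - p) → ¬ (r:ℤ) ∣ (k - q) →
      (tPerm r a b * w) k = w k := by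
    intro k h1 h2
    rw [Equiv.Perm.mul_apply]
    exact tPerm_apply₃ hnd
      (val_class hw (by rw [hwp]; simp) h1) (val_class hw (by rw [hwq]; simp) h2)
  set φ : ℤ → ℤ := fun k => if (r:ℤ) ∣ (k - q) ∧ ¬ M < a + (k - q) then k - (q - p) else k
    with hφ
  refine Set.ncard_le_ncard_of_injOn φ ?_ ?_ (Xset'_finite hr htw M N)
  · rintro k ⟨hk1, hk2⟩
    by_cases hc : (r:ℤ) ∣ (k - q) ∧ ¬ M < a + (k - q)
    · have hφk : φ k = k - (q - p) := if_pos hc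
      rw [hφk]
      obtain ⟨hd, hM⟩ := hc
      have hd2 : (r:ℤ) ∣ (k - (q - p) - p) := by
        have : k - (q - p) - p = k - q := by ring
        rw [this]; exact hd
      obtain ⟨_, h2⟩ := hvp (k - (q - p)) hd2
      constructor
      · show k - (q - p) ≤ N; omega
      · show M < (tPerm r a b * w) (k - (q-p))
        rw [h2]
        have : k - (q - p) - p = k - q := by ring
        rw [this]
        have := (hvq k hd).1
        omega
    · have hφk : φ k = k := if_neg hc
      rw [hφk]
      refine ⟨hk1, ?_⟩
      by_cases hd : (r:ℤ) ∣ (k - q)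
      · have hM : M < a + (k - q) := by
          by_contra hM
          exact hc ⟨hd, hM⟩
        rw [(hvq k hd).2]; omega
      · by_cases hd2 : (r:ℤ) ∣ (k - p)
        · obtain ⟨h1, h2⟩ := hvp k hd2
          rw [h2]; rw [h1] at hk2; omega
        · rw [hvo k hd2 hd]; exact hk2
  · rintro k1 ⟨_, hk12⟩ k2 ⟨_, hk22⟩ heq
    by_cases h1 : (r:ℤ) ∣ (k1 - q) ∧ ¬ M < a + (k1 - q) <;>
      by_cases h2 : (r:ℤ) ∣ (k2 - q) ∧ ¬ M < a + (k2 - q)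
    · rw [hφ] at heq; simp only [if_pos h1, if_pos h2] at heq; omega
    · rw [hφ] at heq; simp only [if_pos h1, if_neg h2] at heq
      exfalso
      have hd2 : (r:ℤ) ∣ (k2 - p) := by
        have : k2 - p = k1 - q := by omega
        rw [this]; exact h1.1
      have := (hvp k2 hd2).1
      rw [this] at hk22
      have : k2 - p = k1 - q := by omega
      omega
    · rw [hφ] at heq; simp only [if_neg h1, if_pos h2] at heq
      exfalso
      have hd1 : (r:ℤ) ∣ (k1 - p) := by
        have : k1 - p = k2 - q := by omega
        rw [this]; exact h2.1
      have := (hvp k1 hd1).1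
      rw [this] at hk12
      have : k1 - p = k2 - q := by omega
      omega
    · rw [hφ] at heq; simp only [if_neg h1, if_neg h2] at heq; exact heq

/-- Window normalization. -/
def nw (r : ℕ) (x : ℤ) : ℤ := ((x - 1) % r) + 1

theorem nw_mem {r : ℕ} (hr : 1 ≤ r) (x : ℤ) : 1 ≤ nw r x ∧ nw r x ≤ (r:ℤ) := by
  have hr' : (0:ℤ) < r := by exact_mod_cast hr
  have h1 : 0 ≤ (x - 1) % r := Int.emod_nonneg _ (by omega)
  have h2 : (x - 1) % r < r := Int.emod_lt_of_pos _ hr'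
  unfold nw; omega

theorem nw_dvd {r : ℕ} (x : ℤ) : (r:ℤ) ∣ (nw r x - x) := by
  have hdm := Int.mul_ediv_add_emod (x - 1) r
  exact ⟨-((x-1) / r), by unfold nw; linarith⟩

theorem nw_eq_self {r : ℕ} {x : ℤ} (h1 : 1 ≤ x) (h2 : x ≤ (r:ℤ)) : nw r x = x := by
  unfold nw
  rw [Int.emod_eq_of_lt (by omega) (by omega)]
  omega

theorem window_unique {r : ℕ} {x y : ℤ} (hx1 : 1 ≤ x) (hx2 : x ≤ (r:ℤ))
    (hy1 : 1 ≤ y) (hy2 : y ≤ (r:ℤ)) (h : (r:ℤ) ∣ (x - y)) : x = y := by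
  have := Int.eq_zero_of_abs_lt_dvd h (by rw [abs_lt]; omega)
  omega

theorem nw_eq_of_dvd {r : ℕ} (hr : 1 ≤ r) {x y : ℤ} (h : (r:ℤ) ∣ (x - y)) :
    nw r x = nw r y := by
  have h1 := nw_mem hr x
  have h2 := nw_mem hr y
  apply window_unique h1.1 h1.2 h2.1 h2.2
  have d1 := nw_dvd (r := r) x
  have d2 := nw_dvd (r := r) y
  have := (d1.sub d2).add h
  have he : nw r x - x - (nw r y - y) + (x - y) = nw r x - nw r y := by ring
  rwa [he] at this

/-- Displacement over the fundamental window. -/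
noncomputable def disp (r : ℕ) (w : Equiv.Perm ℤ) : ℤ := ∑ i ∈ Finset.Icc (1:ℤ) (r:ℤ), (w i - i)

theorem sum_periodic_comp {r : ℕ} (hr : 1 ≤ r) {w : Equiv.Perm ℤ} (hw : Aff r w)
    {f : ℤ → ℤ} (hf : ∀ x, f (x + r) = f x) :
    ∑ i ∈ Finset.Icc (1:ℤ) (r:ℤ), f (w i) = ∑ i ∈ Finset.Icc (1:ℤ) (r:ℤ), f i := by
  have hwinv : Aff r w⁻¹ := aff_inv hw
  apply Finset.sum_nbij' (i := fun a => nw r (w a)) (j := fun a => nw r (w⁻¹ a))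
  · intro a _
    have := nw_mem hr (w a)
    simp only [Finset.mem_Icc]; omega
  · intro a _
    have := nw_mem hr (w⁻¹ a)
    simp only [Finset.mem_Icc]; omega
  · intro a ha
    simp only [Finset.mem_Icc] at ha
    -- w⁻¹ (nw r (w a)) = a + (nw r (w a) - w a)
    have hd : (r:ℤ) ∣ (nw r (w a) - w a) := nw_dvd _
    have h1 : w⁻¹ (nw r (w a)) = w⁻¹ (w a) + (nw r (w a) - w a) := aff_class hwinv hd
    rw [Equiv.Perm.inv_apply_self] at h1
    rw [h1]
    have : (r:ℤ) ∣ (a + (nw r (w a) - w a) - a) := by simpa using hd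
    rw [nw_eq_of_dvd hr this]
    exact nw_eq_self ha.1 ha.2
  · intro a ha
    simp only [Finset.mem_Icc] at ha
    have hd : (r:ℤ) ∣ (nw r (w⁻¹ a) - w⁻¹ a) := nw_dvd _
    have h1 : w (nw r (w⁻¹ a)) = w (w⁻¹ a) + (nw r (w⁻¹ a) - w⁻¹ a) := aff_class hw hd
    rw [Equiv.Perm.apply_inv_self] at h1
    rw [h1]
    have : (r:ℤ) ∣ (a + (nw r (w⁻¹ a) - w⁻¹ a) - a) := by simpa using hd
    rw [nw_eq_of_dvd hr this]
    exact nw_eq_self ha.1 ha.2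
  · intro a _
    have hd : (r:ℤ) ∣ (nw r (w a) - w a) := nw_dvd _
    obtain ⟨m, hm⟩ := hd
    have : nw r (w a) = w a + m * r := by linarith
    rw [this, periodic_shift hf]

theorem disp_mul {r : ℕ} (hr : 1 ≤ r) {u v : Equiv.Perm ℤ} (hu : Aff r u) (hv : Aff r v) :
    disp r (u * v) = disp r u + disp r v := by
  unfold disp
  have h1 : ∀ i : ℤ, (u * v) i - i = (u (v i) - v i) + (v i - i) := by
    intro i; simp [Equiv.Perm.mul_apply]
  calc ∑ i ∈ Finset.Icc (1:ℤ) (r:ℤ), ((u * v) i - i)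
      = ∑ i ∈ Finset.Icc (1:ℤ) (r:ℤ), ((u (v i) - v i) + (v i - i)) := by
        apply Finset.sum_congr rfl; intro i _; exact h1 i
    _ = (∑ i ∈ Finset.Icc (1:ℤ) (r:ℤ), (u (v i) - v i))
        + ∑ i ∈ Finset.Icc (1:ℤ) (r:ℤ), (v i - i) := Finset.sum_add_distrib
    _ = (∑ i ∈ Finset.Icc (1:ℤ) (r:ℤ), (u i - i))
        + ∑ i ∈ Finset.Icc (1:ℤ) (r:ℤ), (v i - i) := by
        congr 1
        exact sum_periodic_comp hr hv (f := fun x => u x - x) (aff_sub_periodic hu)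

theorem disp_one {r : ℕ} : disp r (1 : Equiv.Perm ℤ) = 0 := by
  unfold disp; simp

theorem sum_window_indicator {r : ℕ} (hr : 1 ≤ r) (α c : ℤ) :
    ∑ i ∈ Finset.Icc (1:ℤ) (r:ℤ), (if (r:ℤ) ∣ (i - α) then c else 0) = c := by
  have hmem := nw_mem hr α
  rw [Finset.sum_eq_single_of_mem (nw r α) (by simp only [Finset.mem_Icc]; omega)]
  · rw [if_pos (nw_dvd α)]
  · intro i hi hne
    simp only [Finset.mem_Icc] at hi
    rw [if_neg]
    intro hd
    have hd2 : (r:ℤ) ∣ (i - nw r α) := by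
      have := hd.sub (nw_dvd (r := r) α)
      have he : i - α - (nw r α - α) = i - nw r α := by ring
      rwa [he] at this
    exact hne (window_unique hi.1 hi.2 hmem.1 hmem.2 hd2)

theorem disp_tPerm {r : ℕ} (hr : 1 ≤ r) {a b : ℤ} (hnd : ¬ (r:ℤ) ∣ (b - a)) :
    disp r (tPerm r a b) = 0 := by
  unfold disp
  have hba : ¬ (r:ℤ) ∣ (a - b) := by
    intro h; obtain ⟨m, hm⟩ := h; exact hnd ⟨-m, by linarith⟩
  have key : ∀ i : ℤ, tPerm r a b i - i =
      (if (r:ℤ) ∣ (i - a) then (b - a) else 0) + (if (r:ℤ) ∣ (i - b) then (a - b) else 0) := by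
    intro i
    by_cases h1 : (r:ℤ) ∣ (i - a)
    · have h2 : ¬ (r:ℤ) ∣ (i - b) := by
        intro hc
        exact hnd (by
          have := h1.sub hc
          have he : i - a - (i - b) = b - a := by ring
          rwa [he] at this)
      rw [tPerm_apply₁ hnd h1, if_pos h1, if_neg h2]; ring
    · by_cases h2 : (r:ℤ) ∣ (i - b)
      · rw [tPerm_apply₂ hnd h2, if_neg h1, if_pos h2]; ring
      · rw [tPerm_apply₃ hnd h1 h2, if_neg h1, if_neg h2]; ring
  calc ∑ i ∈ Finset.Icc (1:ℤ) (r:ℤ), (tPerm r a b i - i)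
      = ∑ i ∈ Finset.Icc (1:ℤ) (r:ℤ),
          ((if (r:ℤ) ∣ (i - a) then (b - a) else 0) +
           (if (r:ℤ) ∣ (i - b) then (a - b) else 0)) := by
        apply Finset.sum_congr rfl; intro i _; exact key i
    _ = 0 := by
        rw [Finset.sum_add_distrib, sum_window_indicator hr a (b - a),
          sum_window_indicator hr b (a - b)]
        ring

theorem dvd_disp {r : ℕ} (hr : 1 ≤ r) {w : Equiv.Perm ℤ} (hw : Aff r w) :
    (r:ℤ) ∣ disp r w := by
  have hf : ∀ x : ℤ, ((x + r - 1) % r) = ((x - 1) % r) := by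
    intro x
    have : x + (r:ℤ) - 1 = (x - 1) + r := by ring
    rw [this]
    simp [Int.add_mul_emod_self_left]
  have hsum := sum_periodic_comp hr hw (f := fun x => (x - 1) % r) hf
  have key : ∀ i : ℤ, (r:ℤ) ∣ ((w i - i) - (((w i - 1) % r) - ((i - 1) % r))) := by
    intro i
    have h1 := Int.mul_ediv_add_emod (w i - 1) r
    have h2 := Int.mul_ediv_add_emod (i - 1) r
    exact ⟨(w i - 1) / r - (i - 1) / r, by linarith⟩
  have : (r:ℤ) ∣ ∑ i ∈ Finset.Icc (1:ℤ) (r:ℤ),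
      ((w i - i) - (((w i - 1) % r) - ((i - 1) % r))) :=
    Finset.dvd_sum (fun i _ => key i)
  have he : ∑ i ∈ Finset.Icc (1:ℤ) (r:ℤ), ((w i - i) - (((w i - 1) % r) - ((i - 1) % r)))
      = disp r w - (∑ i ∈ Finset.Icc (1:ℤ) (r:ℤ), ((w i - 1) % r)
        - ∑ i ∈ Finset.Icc (1:ℤ) (r:ℤ), ((i - 1) % r)) := by
    unfold disp
    rw [← Finset.sum_sub_distrib, ← Finset.sum_sub_distrib]
  rw [he, hsum] at this
  simpa using this

theorem rhoP_zpow_apply (m k : ℤ) : (rhoP ^ m) k = k + m := by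
  induction m using Int.induction_on generalizing k with
  | zero => simp
  | succ n ih =>
      have h1 : rhoP ^ ((n:ℤ) + 1) = rhoP ^ (n:ℤ) * rhoP := by
        rw [zpow_add, zpow_one]
      rw [h1, Equiv.Perm.mul_apply]
      have hrho : rhoP k = k + 1 := rfl
      rw [hrho, ih]; ring
  | pred n ih =>
      have h1 : rhoP ^ (-(n:ℤ) - 1) = rhoP ^ (-(n:ℤ)) * rhoP⁻¹ := by
        rw [sub_eq_add_neg, zpow_add, zpow_neg_one]
      rw [h1, Equiv.Perm.mul_apply]
      have hrho : rhoP⁻¹ k = k - 1 := rfl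
      rw [hrho, ih]; ring

theorem aff_rhoP_zpow {r : ℕ} (m : ℤ) : Aff r (rhoP ^ m) := by
  intro i
  rw [rhoP_zpow_apply, rhoP_zpow_apply]; ring

theorem disp_rhoP_zpow {r : ℕ} (hr : 1 ≤ r) (m : ℤ) : disp r (rhoP ^ m) = m * r := by
  unfold disp
  have : ∀ i : ℤ, (rhoP ^ m) i - i = m := fun i => by rw [rhoP_zpow_apply]; ring
  rw [Finset.sum_congr rfl (fun i _ => this i), Finset.sum_const]
  have : (Finset.Icc (1:ℤ) (r:ℤ)).card = r := by
    rw [Int.card_Icc]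
    simp
  rw [this]
  push_cast
  ring

/-- Inversion set. -/
def InvSet (r : ℕ) (w : Equiv.Perm ℤ) : Set (ℤ × ℤ) :=
  {p | 1 ≤ p.1 ∧ p.1 ≤ (r:ℤ) ∧ p.1 < p.2 ∧ w p.2 < w p.1}

/-- Inversion number. -/
noncomputable def invn (r : ℕ) (w : Equiv.Perm ℤ) : ℕ := (InvSet r w).ncard

theorem InvSet_finite {r : ℕ} (hr : 1 ≤ r) {w : Equiv.Perm ℤ} (hw : Aff r w) :
    (InvSet r w).Finite := by
  obtain ⟨C, hC⟩ := periodic_lb hr (f := fun x => w x - x) (aff_sub_periodic hw)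
  obtain ⟨D, hD⟩ := periodic_ub hr (f := fun x => w x - x) (aff_sub_periodic hw)
  apply Set.Finite.subset (Set.finite_Icc ((1:ℤ), (1:ℤ)) ((r:ℤ), (r:ℤ) + D - C))
  rintro ⟨i, j⟩ ⟨h1, h2, h3, h4⟩
  have hci := hD i
  have hcj := hC j
  simp only at hci hcj h1 h2 h3 h4
  simp only [Set.mem_Icc, Prod.mk_le_mk]
  constructor
  · constructor <;> omega
  · constructor <;> omega

theorem invn_one {r : ℕ} : invn r (1 : Equiv.Perm ℤ) = 0 := by
  unfold invn
  convert Set.ncard_empty (ℤ × ℤ)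
  ext ⟨i, j⟩
  simp only [InvSet, Set.mem_setOf_eq, Set.mem_empty_iff_false, iff_false, not_and]
  intro _ _ h3
  simp only [Equiv.Perm.one_apply]
  omega

theorem refl_val₁ {r : ℕ} {u : Equiv.Perm ℤ} (hu : Aff r u) {a b : ℤ}
    (hnd : ¬ (r:ℤ) ∣ (b - a)) {k : ℤ} (hk : (r:ℤ) ∣ (k - u⁻¹ a)) :
    u k = a + (k - u⁻¹ a) ∧ (tPerm r a b * u) k = b + (k - u⁻¹ a) := by
  have hwp : u (u⁻¹ a) = a := u.apply_inv_self a
  have h1 : u k = a + (k - u⁻¹ a) := by rw [aff_class hu hk, hwp]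
  refine ⟨h1, ?_⟩
  have h2 : (r:ℤ) ∣ (u k - a) := by rw [h1]; simpa using hk
  rw [Equiv.Perm.mul_apply, tPerm_apply₁ hnd h2, h1]
  ring

theorem refl_val₂ {r : ℕ} {u : Equiv.Perm ℤ} (hu : Aff r u) {a b : ℤ}
    (hnd : ¬ (r:ℤ) ∣ (b - a)) {k : ℤ} (hk : (r:ℤ) ∣ (k - u⁻¹ b)) :
    u k = b + (k - u⁻¹ b) ∧ (tPerm r a b * u) k = a + (k - u⁻¹ b) := by
  have hwq : u (u⁻¹ b) = b := u.apply_inv_self b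
  have h1 : u k = b + (k - u⁻¹ b) := by rw [aff_class hu hk, hwq]
  refine ⟨h1, ?_⟩
  have h2 : (r:ℤ) ∣ (u k - b) := by rw [h1]; simpa using hk
  rw [Equiv.Perm.mul_apply, tPerm_apply₂ hnd h2, h1]
  ring

theorem refl_val₃ {r : ℕ} {u : Equiv.Perm ℤ} (hu : Aff r u) {a b : ℤ}
    (hnd : ¬ (r:ℤ) ∣ (b - a)) {k : ℤ} (h1 : ¬ (r:ℤ) ∣ (k - u⁻¹ a))
    (h2 : ¬ (r:ℤ) ∣ (k - u⁻¹ b)) : (tPerm r a b * u) k = u k := by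
  rw [Equiv.Perm.mul_apply]
  exact tPerm_apply₃ hnd
    (val_class hu (by rw [u.apply_inv_self]; simp) h1)
    (val_class hu (by rw [u.apply_inv_self]; simp) h2)

theorem not_dvd_val {r : ℕ} {u : Equiv.Perm ℤ} (hu : Aff r u) {x k : ℤ}
    (hk : ¬ (r:ℤ) ∣ (k - u⁻¹ x)) : ¬ (r:ℤ) ∣ (u k - x) :=
  val_class hu (by rw [u.apply_inv_self]; simp) hk

theorem class_diff_ge {r : ℕ} {x y : ℤ} (h : (r:ℤ) ∣ (x - y)) (hlt : y < x) :
    y + r ≤ x := by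
  have := Int.le_of_dvd (by omega) h
  omega

theorem invn_gen_ascent {r : ℕ} (hr2 : 2 ≤ r) {v : Equiv.Perm ℤ} (hv : Aff r v)
    {c : ℤ} (hpq : v⁻¹ c < v⁻¹ (c + 1)) :
    invn r (tPerm r c (c + 1) * v) = invn r v + 1 := by
  have hr : 1 ≤ r := by omega
  have hnd : ¬ (r:ℤ) ∣ ((c + 1) - c) := by
    intro hd
    have he : (c:ℤ) + 1 - c = 1 := by ring
    rw [he] at hd
    have := Int.le_of_dvd one_pos hd
    have : (2:ℤ) ≤ r := by exact_mod_cast hr2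
    omega
  set p := v⁻¹ c with hp
  set q := v⁻¹ (c + 1) with hq
  have hndpq : ¬ (r:ℤ) ∣ (q - p) := by
    apply class_not_dvd hv
    rw [v.apply_inv_self, v.apply_inv_self]
    exact hnd
  set s := tPerm r c (c + 1) with hs
  set P₀ : ℤ × ℤ := (nw r p, q + (nw r p - p)) with hP₀
  have hnwp := nw_mem hr p
  have hnwd := nw_dvd (r := r) p
  have hexcl : ∀ k : ℤ, (r:ℤ) ∣ (k - p) → (r:ℤ) ∣ (k - q) → False := by
    intro k h1 h2
    apply hndpq
    have h3 := h1.sub h2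
    have he : k - p - (k - q) = q - p := by ring
    rwa [he] at h3
  have hd2 : (r:ℤ) ∣ (q + (nw r p - p) - q) := by simpa using hnwd
  have e1 := refl_val₁ hv hnd (k := nw r p) hnwd
  have e2 := refl_val₂ hv hnd (k := q + (nw r p - p)) hd2
  have hP₀not : P₀ ∉ InvSet r v := by
    rintro ⟨_, _, _, hinv⟩
    revert hinv
    show ¬ v (q + (nw r p - p)) < v (nw r p)
    rw [e1.1, e2.1]
    omega
  have hset : InvSet r (s * v) = insert P₀ (InvSet r v) := by
    ext ⟨i, j⟩
    simp only [InvSet, Set.mem_setOf_eq, Set.mem_insert_iff]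
    constructor
    · rintro ⟨h1, h2, h3, h4⟩
      by_cases dpi : (r:ℤ) ∣ (i - p) <;> by_cases dqi : (r:ℤ) ∣ (i - q) <;>
        by_cases dpj : (r:ℤ) ∣ (j - p) <;> by_cases dqj : (r:ℤ) ∣ (j - q)
      all_goals (try exact (hexcl i dpi dqi).elim)
      all_goals (try exact (hexcl j dpj dqj).elim)
      -- (p,p)
      · obtain ⟨ei1, ei2⟩ := refl_val₁ hv hnd dpi
        obtain ⟨ej1, ej2⟩ := refl_val₁ hv hnd dpj
        rw [ei2, ej2] at h4
        right; exact ⟨h1, h2, h3, by rw [ei1, ej1]; omega⟩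
      -- (p,q)
      · obtain ⟨ei1, ei2⟩ := refl_val₁ hv hnd dpi
        obtain ⟨ej1, ej2⟩ := refl_val₂ hv hnd dqj
        rw [ei2, ej2] at h4
        by_cases heq : j - q = i - p
        · left
          have hiw : i = nw r p := by
            refine (window_unique h1 h2 hnwp.1 hnwp.2 ?_).symm ▸ rfl
            have := dpi.sub hnwd
            have he : i - p - (nw r p - p) = i - nw r p := by ring
            rwa [he] at this
          have : j = q + (nw r p - p) := by omega
          simp only [hP₀, Prod.mk.injEq]
          exact ⟨by omega, by omega⟩
        · right
          have hlt : j - q < i - p := by omega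
          have hd : (r:ℤ) ∣ ((i - p) - (j - q)) := dpi.sub dqj
          have := class_diff_ge hd hlt
          have hr2' : (2:ℤ) ≤ r := by exact_mod_cast hr2
          exact ⟨h1, h2, h3, by rw [ei1, ej1]; omega⟩
      -- (p, other)
      · obtain ⟨ei1, ei2⟩ := refl_val₁ hv hnd dpi
        have ej := refl_val₃ hv hnd dpj dqj
        rw [ei2, ej] at h4
        have hne : ¬ (r:ℤ) ∣ (v j - c) := not_dvd_val hv dpj
        right
        refine ⟨h1, h2, h3, ?_⟩
        rw [ei1]
        -- v j < c + 1 + (i - p), v j ≠ c + (i - p)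
        by_cases hcase : v j = c + (i - p)
        · exfalso; apply hne; rw [hcase]; simpa using dpi
        · omega
      -- (q,p)
      · obtain ⟨ei1, ei2⟩ := refl_val₂ hv hnd dqi
        obtain ⟨ej1, ej2⟩ := refl_val₁ hv hnd dpj
        rw [ei2, ej2] at h4
        exfalso
        have hlt : j - p < i - q := by omega
        have h5 := class_diff_ge (dqi.sub dpj) hlt
        omega
      -- (q,q)
      · obtain ⟨ei1, ei2⟩ := refl_val₂ hv hnd dqi
        obtain ⟨ej1, ej2⟩ := refl_val₂ hv hnd dqj
        rw [ei2, ej2] at h4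
        right; exact ⟨h1, h2, h3, by rw [ei1, ej1]; omega⟩
      -- (q, other)
      · obtain ⟨ei1, ei2⟩ := refl_val₂ hv hnd dqi
        have ej := refl_val₃ hv hnd dpj dqj
        rw [ei2, ej] at h4
        right; exact ⟨h1, h2, h3, by rw [ei1]; omega⟩
      -- (other, p)
      · have ei := refl_val₃ hv hnd dpi dqi
        obtain ⟨ej1, ej2⟩ := refl_val₁ hv hnd dpj
        rw [ei, ej2] at h4
        right; exact ⟨h1, h2, h3, by rw [ej1]; omega⟩
      -- (other, q)
      · have ei := refl_val₃ hv hnd dpi dqi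
        obtain ⟨ej1, ej2⟩ := refl_val₂ hv hnd dqj
        rw [ei, ej2] at h4
        have hne : ¬ (r:ℤ) ∣ (v i - (c + 1)) := not_dvd_val hv dqi
        right
        refine ⟨h1, h2, h3, ?_⟩
        rw [ej1]
        by_cases hcase : v i = c + 1 + (j - q)
        · exfalso; apply hne; rw [hcase]; simpa using dqj
        · omega
      -- (other, other)
      · have ei := refl_val₃ hv hnd dpi dqi
        have ej := refl_val₃ hv hnd dpj dqj
        rw [ei, ej] at h4
        right; exact ⟨h1, h2, h3, h4⟩
    · rintro (heq | ⟨h1, h2, h3, h4⟩)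
      · obtain ⟨hi, hj⟩ : i = nw r p ∧ j = q + (nw r p - p) := by
          rw [hP₀, Prod.mk.injEq] at heq; exact ⟨heq.1, heq.2⟩
        subst hi; subst hj
        refine ⟨hnwp.1, hnwp.2, by omega, ?_⟩
        show (s * v) (q + (nw r p - p)) < (s * v) (nw r p)
        rw [e1.2, e2.2]; omega
      · refine ⟨h1, h2, h3, ?_⟩
        show (s * v) j < (s * v) i
        by_cases dpi : (r:ℤ) ∣ (i - p) <;> by_cases dqi : (r:ℤ) ∣ (i - q) <;>
          by_cases dpj : (r:ℤ) ∣ (j - p) <;> by_cases dqj : (r:ℤ) ∣ (j - q)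
        all_goals (try exact (hexcl i dpi dqi).elim)
        all_goals (try exact (hexcl j dpj dqj).elim)
        · obtain ⟨ei1, ei2⟩ := refl_val₁ hv hnd dpi
          obtain ⟨ej1, ej2⟩ := refl_val₁ hv hnd dpj
          rw [ei1, ej1] at h4; rw [ei2, ej2]; omega
        · obtain ⟨ei1, ei2⟩ := refl_val₁ hv hnd dpi
          obtain ⟨ej1, ej2⟩ := refl_val₂ hv hnd dqj
          rw [ei1, ej1] at h4; rw [ei2, ej2]
          -- h4 : c+1+(j-q) < c+(i-p), so j-q ≤ i-p-2
          omega
        · obtain ⟨ei1, ei2⟩ := refl_val₁ hv hnd dpi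
          have ej := refl_val₃ hv hnd dpj dqj
          rw [ei1] at h4; rw [ei2, ej]; omega
        · obtain ⟨ei1, ei2⟩ := refl_val₂ hv hnd dqi
          obtain ⟨ej1, ej2⟩ := refl_val₁ hv hnd dpj
          rw [ei1, ej1] at h4; rw [ei2, ej2]
          -- h4 : c + (j-p) < c + 1 + (i - q): j-p ≤ i-q; need strict: j-p < i-q
          by_cases heq : j - p = i - q
          · exfalso
            -- then j - i = p - q < 0, contradicting i < j
            omega
          · have hlt : j - p < i - q := by omega
            have hd : (r:ℤ) ∣ ((i - q) - (j - p)) := dqi.sub dpj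
            have := class_diff_ge hd hlt
            have hr2' : (2:ℤ) ≤ r := by exact_mod_cast hr2
            omega
        · obtain ⟨ei1, ei2⟩ := refl_val₂ hv hnd dqi
          obtain ⟨ej1, ej2⟩ := refl_val₂ hv hnd dqj
          rw [ei1, ej1] at h4; rw [ei2, ej2]; omega
        · obtain ⟨ei1, ei2⟩ := refl_val₂ hv hnd dqi
          have ej := refl_val₃ hv hnd dpj dqj
          rw [ei1] at h4; rw [ei2, ej]
          have hne : ¬ (r:ℤ) ∣ (v j - c) := not_dvd_val hv dpj
          by_cases hcase : v j = c + (i - q)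
          · exfalso; apply hne; rw [hcase]; simpa using dqi
          · omega
        · have ei := refl_val₃ hv hnd dpi dqi
          obtain ⟨ej1, ej2⟩ := refl_val₁ hv hnd dpj
          rw [ej1] at h4; rw [ei, ej2]
          have hne : ¬ (r:ℤ) ∣ (v i - (c + 1)) := not_dvd_val hv dqi
          by_cases hcase : v i = c + 1 + (j - p)
          · exfalso; apply hne; rw [hcase]; simpa using dpj
          · omega
        · have ei := refl_val₃ hv hnd dpi dqi
          obtain ⟨ej1, ej2⟩ := refl_val₂ hv hnd dqj
          rw [ej1] at h4; rw [ei, ej2]; omega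
        · have ei := refl_val₃ hv hnd dpi dqi
          have ej := refl_val₃ hv hnd dpj dqj
          rw [ei, ej]; exact h4
  unfold invn
  rw [hset, Set.ncard_insert_of_notMem hP₀not (InvSet_finite hr hv)]

theorem invn_refl_weak {r : ℕ} (hr : 1 ≤ r) {u : Equiv.Perm ℤ} (hu : Aff r u)
    {a b : ℤ} (hab : a < b) (hnd : ¬ (r:ℤ) ∣ (b - a)) (hpq : u⁻¹ a < u⁻¹ b) :
    invn r u ≤ invn r (tPerm r a b * u) := by
  set p := u⁻¹ a with hp
  set q := u⁻¹ b with hq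
  set w := tPerm r a b * u with hwdef
  have hw : Aff r w := aff_mul (aff_tPerm a b) hu
  have hndpq : ¬ (r:ℤ) ∣ (q - p) := by
    apply class_not_dvd hu
    rw [u.apply_inv_self, u.apply_inv_self]
    exact hnd
  have hexcl : ∀ k : ℤ, (r:ℤ) ∣ (k - p) → (r:ℤ) ∣ (k - q) → False := by
    intro k d1 d2
    apply hndpq
    have h3 := d1.sub d2
    have he : k - p - (k - q) = q - p := by ring
    rwa [he] at h3
  have hup : ∀ {k : ℤ}, (r:ℤ) ∣ (k - p) → u k = a + (k - p) ∧ w k = b + (k - p) :=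
    fun {k} hk => refl_val₁ hu hnd hk
  have huq : ∀ {k : ℤ}, (r:ℤ) ∣ (k - q) → u k = b + (k - q) ∧ w k = a + (k - q) :=
    fun {k} hk => refl_val₂ hu hnd hk
  have huo : ∀ {k : ℤ}, ¬ (r:ℤ) ∣ (k - p) → ¬ (r:ℤ) ∣ (k - q) → w k = u k :=
    fun {k} h1 h2 => refl_val₃ hu hnd h1 h2
  have hshift : ∀ (k δ : ℤ), (r:ℤ) ∣ δ → u (k + δ) = u k + δ := by
    intro k δ hδ
    have : (r:ℤ) ∣ (k + δ - k) := by simpa using hδ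
    rw [aff_class hu this]
    ring
  -- branch conditions
  set C1 : ℤ × ℤ → Prop := fun z => (r:ℤ) ∣ (z.1 - q) ∧ ¬ (r:ℤ) ∣ (z.2 - p) ∧
      ¬ (r:ℤ) ∣ (z.2 - q) ∧ a + (z.1 - q) ≤ u z.2 with hC1
  set C2 : ℤ × ℤ → Prop := fun z => (r:ℤ) ∣ (z.2 - p) ∧ ¬ (r:ℤ) ∣ (z.1 - p) ∧
      ¬ (r:ℤ) ∣ (z.1 - q) ∧ u z.1 ≤ b + (z.2 - p) with hC2
  set C3 : ℤ × ℤ → Prop := fun z => (r:ℤ) ∣ (z.1 - q) ∧ (r:ℤ) ∣ (z.2 - p) with hC3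
  set ψ : ℤ × ℤ → ℤ × ℤ := fun z =>
    if C1 z then (nw r (p + (z.1 - q)), z.2 + (nw r (p + (z.1 - q)) - (p + (z.1 - q))))
    else if C2 z then (z.1, q + (z.2 - p))
    else if C3 z then
      (nw r (p + (z.1 - q)), (q + (z.2 - p)) + (nw r (p + (z.1 - q)) - (p + (z.1 - q))))
    else z with hψ
  -- branch facts
  have hF1 : ∀ i j : ℤ, (i, j) ∈ InvSet r u → C1 (i, j) →
      ψ (i, j) ∈ InvSet r w ∧ ψ (i, j) ∉ InvSet r u ∧
      (r:ℤ) ∣ ((ψ (i, j)).1 - p) ∧ ¬ (r:ℤ) ∣ ((ψ (i, j)).2 - q) := by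
    rintro i j ⟨h1, h2, h3, h4⟩ hc
    obtain ⟨d1, d2, d3, d4⟩ := hc
    simp only at d1 d2 d3 d4 h1 h2 h3 h4
    have hψz : ψ (i, j) = (nw r (p + (i - q)), j + (nw r (p + (i - q)) - (p + (i - q)))) := by
      rw [hψ]; simp only
      rw [if_pos (show C1 (i, j) from ⟨d1, d2, d3, d4⟩)]
    set x := p + (i - q) with hx
    set δ := nw r x - x with hδd
    have hδ : (r:ℤ) ∣ δ := nw_dvd x
    have hnwm := nw_mem hr x
    have hdi' : (r:ℤ) ∣ (nw r x - p) := by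
      have h5 := hδ.add d1
      have he : δ + (i - q) = nw r x - p := by rw [hδd, hx]; ring
      rwa [he] at h5
    have hui : u i = b + (i - q) := (huq d1).1
    have hwi' : w (nw r x) = b + (nw r x - p) := (hup hdi').2
    have huj' : u (j + δ) = u j + δ := hshift j δ hδ
    have hndj'p : ¬ (r:ℤ) ∣ (j + δ - p) := by
      intro hd
      apply d2
      have h5 := hd.sub hδ
      have he : j + δ - p - δ = j - p := by ring
      rwa [he] at h5
    have hndj'q : ¬ (r:ℤ) ∣ (j + δ - q) := by
      intro hd
      apply d3
      have h5 := hd.sub hδ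
      have he : j + δ - q - δ = j - q := by ring
      rwa [he] at h5
    have hwj' : w (j + δ) = u j + δ := by rw [huo hndj'p hndj'q, huj']
    rw [hψz]
    refine ⟨⟨hnwm.1, hnwm.2, ?_, ?_⟩, ?_, hdi', hndj'q⟩
    · show nw r x < j + δ
      have : nw r x = x + δ := by omega
      have hpq' : p < q := hpq
      omega
    · show w (j + δ) < w (nw r x)
      rw [hwj', hwi']
      have : nw r x - p = (i - q) + δ := by omega
      omega
    · rintro ⟨_, _, _, hinv⟩
      simp only at hinv
      rw [huj'] at hinv
      have hui' : u (nw r x) = a + (nw r x - p) := (hup hdi').1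
      rw [hui'] at hinv
      have : nw r x - p = (i - q) + δ := by omega
      omega
  have hF2 : ∀ i j : ℤ, (i, j) ∈ InvSet r u → C2 (i, j) →
      ψ (i, j) ∈ InvSet r w ∧ ψ (i, j) ∉ InvSet r u ∧
      ¬ (r:ℤ) ∣ ((ψ (i, j)).1 - p) ∧ (r:ℤ) ∣ ((ψ (i, j)).2 - q) := by
    rintro i j ⟨h1, h2, h3, h4⟩ hc
    obtain ⟨d1, d2, d3, d4⟩ := hc
    simp only at d1 d2 d3 d4 h1 h2 h3 h4
    have hnc1 : ¬ C1 (i, j) := by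
      rintro ⟨e1, _⟩
      exact d3 e1
    have hψz : ψ (i, j) = (i, q + (j - p)) := by
      rw [hψ]; simp only
      rw [if_neg hnc1, if_pos (show C2 (i, j) from ⟨d1, d2, d3, d4⟩)]
    have hdq : (r:ℤ) ∣ (q + (j - p) - q) := by simpa using d1
    have huj : u j = a + (j - p) := (hup d1).1
    have hwj2 : w (q + (j - p)) = a + (j - p) := by
      have := (huq hdq).2
      rw [this]
      congr 1
      omega
    have huj2 : u (q + (j - p)) = b + (j - p) := by
      have := (huq hdq).1
      rw [this]
      congr 1
      omega
    have hwi : w i = u i := huo d2 d3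
    rw [hψz]
    have hpq' : p < q := hpq
    refine ⟨⟨h1, h2, by omega, ?_⟩, ?_, d2, hdq⟩
    · show w (q + (j - p)) < w i
      rw [hwj2, hwi]
      omega
    · rintro ⟨_, _, _, hinv⟩
      simp only at hinv
      rw [huj2] at hinv
      omega
  have hF3 : ∀ i j : ℤ, (i, j) ∈ InvSet r u → C3 (i, j) →
      ψ (i, j) ∈ InvSet r w ∧ ψ (i, j) ∉ InvSet r u ∧
      (r:ℤ) ∣ ((ψ (i, j)).1 - p) ∧ (r:ℤ) ∣ ((ψ (i, j)).2 - q) := by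
    rintro i j ⟨h1, h2, h3, h4⟩ hc
    obtain ⟨d1, d2⟩ := hc
    simp only at d1 d2 h1 h2 h3 h4
    have hnc1 : ¬ C1 (i, j) := by
      rintro ⟨_, e2, _⟩
      exact e2 d2
    have hnc2 : ¬ C2 (i, j) := by
      rintro ⟨_, _, e3, _⟩
      exact e3 d1
    have hψz : ψ (i, j) = (nw r (p + (i - q)), (q + (j - p)) + (nw r (p + (i - q)) - (p + (i - q)))) := by
      rw [hψ]; simp only
      rw [if_neg hnc1, if_neg hnc2, if_pos (show C3 (i, j) from ⟨d1, d2⟩)]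
    set x := p + (i - q) with hx
    set δ := nw r x - x with hδd
    have hδ : (r:ℤ) ∣ δ := nw_dvd x
    have hnwm := nw_mem hr x
    have hdi' : (r:ℤ) ∣ (nw r x - p) := by
      have h5 := hδ.add d1
      have he : δ + (i - q) = nw r x - p := by rw [hδd, hx]; ring
      rwa [he] at h5
    have hdj' : (r:ℤ) ∣ ((q + (j - p)) + δ - q) := by
      have h5 := d2.add hδ
      have he : j - p + δ = q + (j - p) + δ - q := by ring
      rwa [he] at h5
    have hui : u i = b + (i - q) := (huq d1).1
    have huj : u j = a + (j - p) := (hup d2).1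
    have hwi' : w (nw r x) = b + (nw r x - p) := (hup hdi').2
    have hui' : u (nw r x) = a + (nw r x - p) := (hup hdi').1
    have hwj' : w ((q + (j - p)) + δ) = a + ((q + (j - p)) + δ - q) := (huq hdj').2
    have huj' : u ((q + (j - p)) + δ) = b + ((q + (j - p)) + δ - q) := (huq hdj').1
    rw [hψz]
    have hpq' : p < q := hpq
    have hxδ : nw r x = x + δ := by omega
    refine ⟨⟨hnwm.1, hnwm.2, ?_, ?_⟩, ?_, hdi', hdj'⟩
    · show nw r x < q + (j - p) + δ
      omega
    · show w (q + (j - p) + δ) < w (nw r x)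
      rw [hwj', hwi']
      omega
    · rintro ⟨_, _, _, hinv⟩
      simp only at hinv
      rw [huj', hui'] at hinv
      omega
  refine Set.ncard_le_ncard_of_injOn ψ ?_ ?_ (InvSet_finite hr hw)
  · rintro ⟨i, j⟩ hmem
    by_cases hc1 : C1 (i, j)
    · exact (hF1 i j hmem hc1).1
    by_cases hc2 : C2 (i, j)
    · exact (hF2 i j hmem hc2).1
    by_cases hc3 : C3 (i, j)
    · exact (hF3 i j hmem hc3).1
    have hψz : ψ (i, j) = (i, j) := by
      rw [hψ]; simp only
      rw [if_neg hc1, if_neg hc2, if_neg hc3]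
    rw [hψz]
    obtain ⟨h1, h2, h3, h4⟩ := hmem
    simp only at h1 h2 h3 h4
    refine ⟨h1, h2, h3, ?_⟩
    show w j < w i
    by_cases dpi : (r:ℤ) ∣ (i - p) <;> by_cases dqi : (r:ℤ) ∣ (i - q) <;>
      by_cases dpj : (r:ℤ) ∣ (j - p) <;> by_cases dqj : (r:ℤ) ∣ (j - q)
    all_goals (try exact (hexcl i dpi dqi).elim)
    all_goals (try exact (hexcl j dpj dqj).elim)
    -- (p,p)
    · rw [(hup dpi).2, (hup dpj).2]
      rw [(hup dpi).1, (hup dpj).1] at h4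
      omega
    -- (p,q)
    · rw [(hup dpi).2, (huq dqj).2]
      rw [(hup dpi).1, (huq dqj).1] at h4
      omega
    -- (p,other)
    · rw [(hup dpi).2, huo dpj dqj]
      rw [(hup dpi).1] at h4
      omega
    -- (q,p) : this is C3, contradiction
    · exact (hc3 ⟨dqi, dpj⟩).elim
    -- (q,q)
    · rw [(huq dqi).2, (huq dqj).2]
      rw [(huq dqi).1, (huq dqj).1] at h4
      omega
    -- (q,other) : ¬C1 gives strict
    · have hstr : u j < a + (i - q) := by
        by_contra hcon
        exact hc1 ⟨dqi, dpj, dqj, not_lt.1 hcon⟩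
      rw [(huq dqi).2, huo dpj dqj]
      omega
    -- (other,p) : ¬C2 gives strict
    · have hstr : b + (j - p) < u i := by
        by_contra hcon
        exact hc2 ⟨dpj, dpi, dqi, not_lt.1 hcon⟩
      rw [huo dpi dqi, (hup dpj).2]
      omega
    -- (other,q)
    · rw [huo dpi dqi, (huq dqj).2]
      rw [(huq dqj).1] at h4
      omega
    -- (other,other)
    · rw [huo dpi dqi, huo dpj dqj]
      exact h4
  · rintro ⟨i1, j1⟩ hm1 ⟨i2, j2⟩ hm2 heq
    have hwin1 : 1 ≤ i1 ∧ i1 ≤ (r:ℤ) := ⟨hm1.1, hm1.2.1⟩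
    have hwin2 : 1 ≤ i2 ∧ i2 ≤ (r:ℤ) := ⟨hm2.1, hm2.2.1⟩
    have hqq : ∀ {k1 k2 : ℤ}, 1 ≤ k1 → k1 ≤ (r:ℤ) → 1 ≤ k2 → k2 ≤ (r:ℤ) →
        (r:ℤ) ∣ (k1 - q) → (r:ℤ) ∣ (k2 - q) → k1 = k2 := by
      intro k1 k2 e1 e2 e3 e4 e5 e6
      apply window_unique e1 e2 e3 e4
      have h5 := e5.sub e6
      have he : k1 - q - (k2 - q) = k1 - k2 := by ring
      rwa [he] at h5
    by_cases hx1 : C1 (i1, j1) <;> by_cases hx2 : C2 (i1, j1) <;>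
      by_cases hx3 : C3 (i1, j1) <;>
      by_cases hy1 : C1 (i2, j2) <;> by_cases hy2 : C2 (i2, j2) <;>
      by_cases hy3 : C3 (i2, j2)
    -- eliminate incompatible double-branch cases
    all_goals (try exact (hx1.2.1 hx2.1).elim)
    all_goals (try exact (hx1.2.1 hx3.2).elim)
    all_goals (try exact (hx2.2.2.1 hx3.1).elim)
    all_goals (try exact (hy1.2.1 hy2.1).elim)
    all_goals (try exact (hy1.2.1 hy3.2).elim)
    all_goals (try exact (hy2.2.2.1 hy3.1).elim)
    -- C1 / C1
    · have hi : i1 = i2 := hqq hwin1.1 hwin1.2 hwin2.1 hwin2.2 hx1.1 hy1.1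
      subst hi
      have e1 : ψ (i1, j1) = (nw r (p + (i1 - q)), j1 + (nw r (p + (i1 - q)) - (p + (i1 - q)))) := by
        rw [hψ]; simp only; rw [if_pos hx1]
      have e2 : ψ (i1, j2) = (nw r (p + (i1 - q)), j2 + (nw r (p + (i1 - q)) - (p + (i1 - q)))) := by
        rw [hψ]; simp only; rw [if_pos hy1]
      rw [e1, e2, Prod.mk.injEq] at heq
      have : j1 = j2 := by omega
      rw [this]
    -- C1 / C2
    · exfalso
      apply (hF1 i1 j1 hm1 hx1).2.2.2
      rw [heq]
      exact (hF2 i2 j2 hm2 hy2).2.2.2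
    -- C1 / C3
    · exfalso
      apply (hF1 i1 j1 hm1 hx1).2.2.2
      rw [heq]
      exact (hF3 i2 j2 hm2 hy3).2.2.2
    -- C1 / else
    · exfalso
      have hψy : ψ (i2, j2) = (i2, j2) := by
        rw [hψ]; simp only; rw [if_neg hy1, if_neg hy2, if_neg hy3]
      apply (hF1 i1 j1 hm1 hx1).2.1
      rw [heq, hψy]
      exact hm2
    -- C2 / C1
    · exfalso
      apply (hF1 i2 j2 hm2 hy1).2.2.2
      rw [← heq]
      exact (hF2 i1 j1 hm1 hx2).2.2.2
    -- C2 / C2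
    · have e1 : ψ (i1, j1) = (i1, q + (j1 - p)) := by
        rw [hψ]; simp only
        rw [if_neg (fun hc => hc.2.1 hx2.1), if_pos hx2]
      have e2 : ψ (i2, j2) = (i2, q + (j2 - p)) := by
        rw [hψ]; simp only
        rw [if_neg (fun hc => hc.2.1 hy2.1), if_pos hy2]
      rw [e1, e2, Prod.mk.injEq] at heq
      have h5 : j1 = j2 := by omega
      rw [heq.1, h5]
    -- C2 / C3
    · exfalso
      apply (hF2 i1 j1 hm1 hx2).2.2.1
      rw [heq]
      exact (hF3 i2 j2 hm2 hy3).2.2.1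
    -- C2 / else
    · exfalso
      have hψy : ψ (i2, j2) = (i2, j2) := by
        rw [hψ]; simp only; rw [if_neg hy1, if_neg hy2, if_neg hy3]
      apply (hF2 i1 j1 hm1 hx2).2.1
      rw [heq, hψy]
      exact hm2
    -- C3 / C1
    · exfalso
      apply (hF1 i2 j2 hm2 hy1).2.2.2
      rw [← heq]
      exact (hF3 i1 j1 hm1 hx3).2.2.2
    -- C3 / C2
    · exfalso
      apply (hF2 i2 j2 hm2 hy2).2.2.1
      rw [← heq]
      exact (hF3 i1 j1 hm1 hx3).2.2.1
    -- C3 / C3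
    · have hi : i1 = i2 := hqq hwin1.1 hwin1.2 hwin2.1 hwin2.2 hx3.1 hy3.1
      subst hi
      have e1 : ψ (i1, j1) = (nw r (p + (i1 - q)), (q + (j1 - p)) + (nw r (p + (i1 - q)) - (p + (i1 - q)))) := by
        rw [hψ]; simp only
        rw [if_neg (fun hc => hc.2.1 hx3.2), if_neg (fun hc => hc.2.2.1 hx3.1), if_pos hx3]
      have e2 : ψ (i1, j2) = (nw r (p + (i1 - q)), (q + (j2 - p)) + (nw r (p + (i1 - q)) - (p + (i1 - q)))) := by
        rw [hψ]; simp only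
        rw [if_neg (fun hc => hc.2.1 hy3.2), if_neg (fun hc => hc.2.2.1 hy3.1), if_pos hy3]
      rw [e1, e2, Prod.mk.injEq] at heq
      have : j1 = j2 := by omega
      rw [this]
    -- C3 / else
    · exfalso
      have hψy : ψ (i2, j2) = (i2, j2) := by
        rw [hψ]; simp only; rw [if_neg hy1, if_neg hy2, if_neg hy3]
      apply (hF3 i1 j1 hm1 hx3).2.1
      rw [heq, hψy]
      exact hm2
    -- else / C1
    · exfalso
      have hψx : ψ (i1, j1) = (i1, j1) := by
        rw [hψ]; simp only; rw [if_neg hx1, if_neg hx2, if_neg hx3]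
      apply (hF1 i2 j2 hm2 hy1).2.1
      rw [← heq, hψx]
      exact hm1
    -- else / C2
    · exfalso
      have hψx : ψ (i1, j1) = (i1, j1) := by
        rw [hψ]; simp only; rw [if_neg hx1, if_neg hx2, if_neg hx3]
      apply (hF2 i2 j2 hm2 hy2).2.1
      rw [← heq, hψx]
      exact hm1
    -- else / C3
    · exfalso
      have hψx : ψ (i1, j1) = (i1, j1) := by
        rw [hψ]; simp only; rw [if_neg hx1, if_neg hx2, if_neg hx3]
      apply (hF3 i2 j2 hm2 hy3).2.1
      rw [← heq, hψx]
      exact hm1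
    -- else / else
    · have hψx : ψ (i1, j1) = (i1, j1) := by
        rw [hψ]; simp only; rw [if_neg hx1, if_neg hx2, if_neg hx3]
      have hψy : ψ (i2, j2) = (i2, j2) := by
        rw [hψ]; simp only; rw [if_neg hy1, if_neg hy2, if_neg hy3]
      rw [hψx, hψy] at heq
      exact heq

theorem gen_spec {r : ℕ} {s : Equiv.Perm ℤ} (hs : s ∈ sGen r) :
    ∃ c : ℤ, 1 ≤ c ∧ c ≤ (r:ℤ) ∧ s = tPerm r c (c + 1) := hs

theorem not_dvd_one {r : ℕ} (hr2 : 2 ≤ r) {c : ℤ} : ¬ (r:ℤ) ∣ ((c + 1) - c) := by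
  intro hd
  have he : (c:ℤ) + 1 - c = 1 := by ring
  rw [he] at hd
  have := Int.le_of_dvd one_pos hd
  have : (2:ℤ) ≤ r := by exact_mod_cast hr2
  omega

theorem aff_gen {r : ℕ} {s : Equiv.Perm ℤ} (hs : s ∈ sGen r) : Aff r s := by
  obtain ⟨c, _, _, rfl⟩ := gen_spec hs
  exact aff_tPerm c (c + 1)

theorem disp_gen {r : ℕ} (hr2 : 2 ≤ r) {s : Equiv.Perm ℤ} (hs : s ∈ sGen r) :
    disp r s = 0 := by
  obtain ⟨c, _, _, rfl⟩ := gen_spec hs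
  exact disp_tPerm (by omega) (not_dvd_one hr2)

theorem tPerm_mul_self {r : ℕ} (i j : ℤ) : tPerm r i j * tPerm r i j = 1 := by
  nth_rewrite 1 [← tPerm_inv]
  exact inv_mul_cancel _

theorem tPerm_apply_self₁ {r : ℕ} {a b : ℤ} (hnd : ¬ (r:ℤ) ∣ (b - a)) :
    tPerm r a b a = b := by
  rw [tPerm_apply₁ hnd (by simp)]
  ring

theorem tPerm_apply_self₂ {r : ℕ} {a b : ℤ} (hnd : ¬ (r:ℤ) ∣ (b - a)) :
    tPerm r a b b = a := by
  rw [tPerm_apply₂ hnd (by simp)]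
  ring

theorem inv_pair_swap {r : ℕ} {v : Equiv.Perm ℤ} {a b : ℤ} (hnd : ¬ (r:ℤ) ∣ (b - a)) :
    (tPerm r a b * v)⁻¹ a = v⁻¹ b ∧ (tPerm r a b * v)⁻¹ b = v⁻¹ a := by
  constructor
  · rw [mul_inv_rev, Equiv.Perm.mul_apply, tPerm_inv, tPerm_apply_self₁ hnd]
  · rw [mul_inv_rev, Equiv.Perm.mul_apply, tPerm_inv, tPerm_apply_self₂ hnd]

theorem invn_gen_descent {r : ℕ} (hr2 : 2 ≤ r) {v : Equiv.Perm ℤ} (hv : Aff r v)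
    {c : ℤ} (hdesc : v⁻¹ (c + 1) < v⁻¹ c) :
    invn r (tPerm r c (c + 1) * v) + 1 = invn r v := by
  set s := tPerm r c (c + 1) with hs
  set u := s * v with hu
  have hnd : ¬ (r:ℤ) ∣ ((c + 1) - c) := not_dvd_one hr2
  have hau : Aff r u := aff_mul (aff_tPerm _ _) hv
  obtain ⟨e1, e2⟩ := inv_pair_swap (v := v) hnd
  have hasc : u⁻¹ c < u⁻¹ (c + 1) := by
    rw [hu, e1, e2]
    exact hdesc
  have := invn_gen_ascent hr2 hau hasc
  have hsu : s * u = v := by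
    rw [hu, ← mul_assoc, tPerm_mul_self, one_mul]
  rw [hsu] at this
  omega

theorem invn_gen_le {r : ℕ} (hr2 : 2 ≤ r) {v : Equiv.Perm ℤ} (hv : Aff r v)
    {s : Equiv.Perm ℤ} (hs : s ∈ sGen r) :
    invn r (s * v) ≤ invn r v + 1 := by
  obtain ⟨c, hc1, hc2, rfl⟩ := gen_spec hs
  rcases lt_trichotomy (v⁻¹ c) (v⁻¹ (c + 1)) with h | h | h
  · rw [invn_gen_ascent hr2 hv h]
  · exact absurd (v⁻¹.injective h) (by omega)
  · have := invn_gen_descent hr2 hv h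
    omega

theorem aff_list_prod {r : ℕ} {l : List (Equiv.Perm ℤ)} (hl : ∀ s ∈ l, s ∈ sGen r) :
    Aff r l.prod := by
  induction l with
  | nil => exact aff_one
  | cons s t ih =>
      rw [List.prod_cons]
      exact aff_mul (aff_gen (hl s (by simp))) (ih (fun x hx => hl x (by simp [hx])))

theorem invn_word_le {r : ℕ} (hr2 : 2 ≤ r) {l : List (Equiv.Perm ℤ)}
    (hl : ∀ s ∈ l, s ∈ sGen r) {v : Equiv.Perm ℤ} (hv : Aff r v) :
    invn r (l.prod * v) ≤ l.length + invn r v := by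
  induction l with
  | nil => simp
  | cons s t ih =>
      rw [List.prod_cons, mul_assoc]
      have ht : ∀ x ∈ t, x ∈ sGen r := fun x hx => hl x (by simp [hx])
      have h1 : Aff r (t.prod * v) := aff_mul (aff_list_prod ht) hv
      have h2 := invn_gen_le hr2 h1 (hl s (by simp))
      have h3 := ih ht
      simp only [List.length_cons]
      omega

theorem strict_mono_of_no_inv {r : ℕ} (hr : 1 ≤ r) {v : Equiv.Perm ℤ} (hv : Aff r v)
    (h : InvSet r v = ∅) : ∀ i j : ℤ, i < j → v i < v j := by
  intro i j hij
  set δ := nw r i - i with hδd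
  have hδ : (r:ℤ) ∣ δ := nw_dvd i
  have hnwm := nw_mem hr i
  have hvi : v (nw r i) = v i + δ := by
    have hd : (r:ℤ) ∣ (nw r i - i) := hδ
    rw [show nw r i = i + δ by omega]
    have : (r:ℤ) ∣ (i + δ - i) := by simpa using hδ
    rw [aff_class hv this]
    ring
  have hvj : v (j + δ) = v j + δ := by
    have : (r:ℤ) ∣ (j + δ - j) := by simpa using hδ
    rw [aff_class hv this]
    ring
  have hord : nw r i < j + δ := by omega
  have hnotinv : (nw r i, j + δ) ∉ InvSet r v := by rw [h]; exact Set.notMem_empty _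
  have hne : v (j + δ) ≠ v (nw r i) := by
    intro hc
    have := v.injective hc
    omega
  have : ¬ v (j + δ) < v (nw r i) := by
    intro hc
    exact hnotinv ⟨hnwm.1, hnwm.2, hord, hc⟩
  rw [hvi, hvj] at this hne
  omega

theorem eq_one_of_no_inv {r : ℕ} (hr : 1 ≤ r) {v : Equiv.Perm ℤ} (hv : Aff r v)
    (h : InvSet r v = ∅) (hd : disp r v = 0) : v = 1 := by
  have hmono := strict_mono_of_no_inv hr hv h
  have hstep : ∀ k : ℤ, v (k + 1) = v k + 1 := by
    intro k
    set x := v⁻¹ (v k + 1) with hx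
    have hvx : v x = v k + 1 := v.apply_inv_self _
    have hxk : k < x := by
      by_contra hc
      push_neg at hc
      rcases eq_or_lt_of_le hc with hc' | hc'
      · rw [hc'] at hvx; omega
      · have := hmono x k hc'; omega
    have hle : v (k + 1) ≤ v x := by
      rcases eq_or_lt_of_le (show k + 1 ≤ x by omega) with hc | hc
      · rw [hc]
      · exact le_of_lt (hmono _ _ hc)
    have := hmono k (k + 1) (by omega)
    omega
  have hlin : ∀ k : ℤ, v k = k + v 0 := by
    intro k
    induction k using Int.induction_on with
    | zero => simp
    | succ n ih => rw [hstep]; omega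
    | pred n ih =>
        have := hstep (-(n:ℤ) - 1)
        simp only [sub_add_cancel] at this
        omega
  have hv0 : (r:ℤ) * v 0 = 0 := by
    have h1 : disp r v = ∑ i ∈ Finset.Icc (1:ℤ) (r:ℤ), v 0 := by
      unfold disp
      apply Finset.sum_congr rfl
      intro i _
      rw [hlin i]; ring
    rw [Finset.sum_const, nsmul_eq_mul, Int.card_Icc] at h1
    rw [hd] at h1
    have h2 : ((((r:ℤ) + 1 - 1).toNat : ℕ) : ℤ) = (r:ℤ) := by simp
    rw [h2] at h1
    omega
  have hv00 : v 0 = 0 := by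
    have hr' : (0:ℤ) < r := by exact_mod_cast hr
    rcases mul_eq_zero.mp hv0 with h' | h'
    · omega
    · exact h'
  apply Equiv.ext
  intro k
  rw [hlin k, hv00]
  simp

theorem exists_descent {r : ℕ} (hr : 1 ≤ r) {v : Equiv.Perm ℤ} (hv : Aff r v)
    (h : (InvSet r v).Nonempty) :
    ∃ c : ℤ, 1 ≤ c ∧ c ≤ (r:ℤ) ∧ v⁻¹ (c + 1) < v⁻¹ c := by
  by_contra hc
  push_neg at hc
  have hasc : ∀ c : ℤ, 1 ≤ c → c ≤ (r:ℤ) → v⁻¹ c < v⁻¹ (c + 1) := by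
    intro c h1 h2
    have h3 := hc c h1 h2
    have hne : v⁻¹ c ≠ v⁻¹ (c + 1) := fun hx => by
      have := v⁻¹.injective hx; omega
    omega
  have hall : ∀ c : ℤ, v⁻¹ c < v⁻¹ (c + 1) := by
    intro c
    have hnwm := nw_mem hr c
    have hδ : (r:ℤ) ∣ (nw r c - c) := nw_dvd c
    have hvinv : Aff r v⁻¹ := aff_inv hv
    have e1 : v⁻¹ (nw r c) = v⁻¹ c + (nw r c - c) := aff_class hvinv hδ
    have e2 : v⁻¹ (nw r c + 1) = v⁻¹ (c + 1) + (nw r c - c) := by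
      have : (r:ℤ) ∣ (nw r c + 1 - (c + 1)) := by
        have he : nw r c + 1 - (c + 1) = nw r c - c := by ring
        rw [he]; exact hδ
      rw [aff_class hvinv this]
      ring
    have := hasc (nw r c) hnwm.1 hnwm.2
    omega
  obtain ⟨⟨i, j⟩, hmem⟩ := h
  obtain ⟨h1, h2, h3, h4⟩ := hmem
  simp only at h1 h2 h3 h4
  -- v⁻¹ strictly monotone on successors: derive monotone
  have hmono : ∀ m : ℕ, ∀ c : ℤ, v⁻¹ c < v⁻¹ (c + 1 + m) := by
    intro m
    induction m with
    | zero => intro c; simpa using hall c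
    | succ n ih =>
        intro c
        have h5 := ih c
        have h6 := hall (c + 1 + n)
        have he : (c + 1 + n) + 1 = c + 1 + (n + 1 : ℕ) := by push_cast; ring
        rw [he] at h6
        omega
  have hvmono : ∀ x y : ℤ, x < y → v⁻¹ x < v⁻¹ y := by
    intro x y hxy
    have hm : y = x + 1 + ((y - x - 1).toNat : ℤ) := by omega
    rw [hm]
    exact hmono _ x
  have := hvmono (v j) (v i) h4
  rw [Equiv.Perm.inv_apply_self, Equiv.Perm.inv_apply_self] at this
  omega

theorem word_exists {r : ℕ} (hr2 : 2 ≤ r) {v : Equiv.Perm ℤ} (hv : Aff r v)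
    (hd : disp r v = 0) :
    ∃ l : List (Equiv.Perm ℤ), (∀ s ∈ l, s ∈ sGen r) ∧ l.prod = v ∧
      l.length = invn r v := by
  have hr : 1 ≤ r := by omega
  generalize hn : invn r v = n
  induction n using Nat.strong_induction_on generalizing v with
  | _ n ih =>
      rcases Nat.eq_zero_or_pos n with h0 | hpos
      · subst h0
        have hempty : InvSet r v = ∅ := by
          have hfin := InvSet_finite hr hv
          rw [← Set.ncard_eq_zero hfin]
          exact hn
        have := eq_one_of_no_inv hr hv hempty hd
        exact ⟨[], by simp, by simp [this], by simp [hn]⟩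
      · have hne : (InvSet r v).Nonempty := by
          rw [Set.nonempty_iff_ne_empty]
          intro hc
          rw [invn, hc, Set.ncard_empty] at hn
          omega
        obtain ⟨c, hc1, hc2, hdesc⟩ := exists_descent hr hv hne
        set s := tPerm r c (c + 1) with hs
        have hsgen : s ∈ sGen r := ⟨c, hc1, hc2, rfl⟩
        have hsv : Aff r (s * v) := aff_mul (aff_gen hsgen) hv
        have hdsv : disp r (s * v) = 0 := by
          rw [disp_mul hr (aff_gen hsgen) hv, disp_gen hr2 hsgen, hd]
          ring
        have hinv := invn_gen_descent hr2 hv hdesc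
        rw [← hs] at hinv
        obtain ⟨l, hl1, hl2, hl3⟩ := ih (invn r (s * v)) (by omega) hsv hdsv rfl
        refine ⟨s :: l, ?_, ?_, ?_⟩
        · intro x hx
          rcases List.mem_cons.mp hx with h | h
          · rw [h]; exact hsgen
          · exact hl1 x h
        · rw [List.prod_cons, hl2, hs, ← mul_assoc, tPerm_mul_self, one_mul]
        · simp only [List.length_cons, hl3]
          omega

theorem lenW_eq_invn {r : ℕ} (hr2 : 2 ≤ r) {v : Equiv.Perm ℤ} (hv : Aff r v)
    (hd : disp r v = 0) : lenW r v = invn r v := by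
  have hr : 1 ≤ r := by omega
  obtain ⟨l, hl1, hl2, hl3⟩ := word_exists hr2 hv hd
  apply le_antisymm
  · apply Nat.sInf_le
    exact ⟨l, hl3, hl1, hl2⟩
  · have hne : {m | ∃ l : List (Equiv.Perm ℤ), l.length = m ∧ (∀ s ∈ l, s ∈ sGen r) ∧
        l.prod = v}.Nonempty := ⟨l.length, l, rfl, hl1, hl2⟩
    obtain ⟨l', hl'1, hl'2, hl'3⟩ := Nat.sInf_mem hne
    have := invn_word_le hr2 hl'2 (aff_one (r := r)) (l := l')
    rw [mul_one, hl'3, invn_one] at this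
    unfold lenW
    omega

theorem TSet_spec {r : ℕ} {t : Equiv.Perm ℤ} (ht : t ∈ TSet r) :
    ∃ a c : ℤ, a < c ∧ ¬ (r:ℤ) ∣ (c - a) ∧ t = tPerm r a c := ht

theorem key_step {r : ℕ} (hr2 : 2 ≤ r) {w : Equiv.Perm ℤ} (hw : Aff r w)
    (hdw : disp r w = 0) {a b : ℤ} (hab : a < b) (hnd : ¬ (r:ℤ) ∣ (b - a))
    (hlen : lenW r w < lenW r (tPerm r a b * w)) : w⁻¹ a < w⁻¹ b := by
  have hr : 1 ≤ r := by omega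
  have htw : Aff r (tPerm r a b * w) := aff_mul (aff_tPerm _ _) hw
  have hdtw : disp r (tPerm r a b * w) = 0 := by
    rw [disp_mul hr (aff_tPerm _ _) hw, disp_tPerm hr hnd, hdw]
    ring
  rw [lenW_eq_invn hr2 hw hdw, lenW_eq_invn hr2 htw hdtw] at hlen
  rcases lt_trichotomy (w⁻¹ a) (w⁻¹ b) with h | h | h
  · exact h
  · exact absurd (w⁻¹.injective h) (by omega)
  · exfalso
    set u := tPerm r a b * w with hu
    obtain ⟨e1, e2⟩ := inv_pair_swap (v := w) hnd
    have hasc : u⁻¹ a < u⁻¹ b := by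
      rw [hu, e1, e2]
      exact h
    have hau : Aff r u := htw
    have := invn_refl_weak hr hau hab hnd hasc
    have htu : tPerm r a b * u = w := by
      rw [hu, ← mul_assoc, tPerm_mul_self, one_mul]
    rw [htu] at this
    omega

theorem aff_list_prodT {r : ℕ} {l : List (Equiv.Perm ℤ)} (hl : ∀ t ∈ l, t ∈ TSet r) :
    Aff r l.prod := by
  induction l with
  | nil => exact aff_one
  | cons s t ih =>
      rw [List.prod_cons]
      obtain ⟨a, c, _, _, rfl⟩ := TSet_spec (hl s (by simp))
      exact aff_mul (aff_tPerm a c) (ih (fun x hx => hl x (by simp [hx])))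

theorem disp_list_prodT {r : ℕ} (hr : 1 ≤ r) {l : List (Equiv.Perm ℤ)}
    (hl : ∀ t ∈ l, t ∈ TSet r) : disp r l.prod = 0 := by
  induction l with
  | nil => exact disp_one
  | cons s t ih =>
      rw [List.prod_cons]
      obtain ⟨a, c, _, hnd, rfl⟩ := TSet_spec (hl s (by simp))
      rw [disp_mul hr (aff_tPerm a c) (aff_list_prodT (fun x hx => hl x (by simp [hx]))),
        disp_tPerm hr hnd, ih (fun x hx => hl x (by simp [hx]))]
      ring

theorem chain_cnt {r : ℕ} (hr2 : 2 ≤ r) {y0 : Equiv.Perm ℤ} (hy0 : Aff r y0)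
    (hdy0 : disp r y0 = 0) (l : List (Equiv.Perm ℤ)) (hl : ∀ t ∈ l, t ∈ TSet r)
    (hlen : ∀ k, k < l.length →
      lenW r ((l.drop (k + 1)).prod * y0) < lenW r ((l.drop k).prod * y0)) :
    ∀ M N : ℤ, (Xset y0 M N).ncard ≤ (Xset (l.prod * y0) M N).ncard ∧
      (Xset' y0 M N).ncard ≤ (Xset' (l.prod * y0) M N).ncard := by
  have hr : 1 ≤ r := by omega
  induction l with
  | nil => intro M N; simp
  | cons t l' ih =>
      intro M N
      have hl' : ∀ x ∈ l', x ∈ TSet r := fun x hx => hl x (by simp [hx])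
      have hlen' : ∀ k, k < l'.length →
          lenW r ((l'.drop (k + 1)).prod * y0) < lenW r ((l'.drop k).prod * y0) := by
        intro k hk
        have := hlen (k + 1) (by simp; omega)
        simpa using this
      have ihMN := ih hl' hlen' M N
      obtain ⟨a, b, hab, hnd, rfl⟩ := TSet_spec (hl t (by simp))
      set w' := l'.prod * y0 with hw'
      have haw' : Aff r w' := aff_mul (aff_list_prodT hl') hy0
      have hdw' : disp r w' = 0 := by
        rw [disp_mul hr (aff_list_prodT hl') hy0, disp_list_prodT hr hl', hdy0]
        ring
      have hstep := hlen 0 (by simp)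
      simp only [List.drop_zero, List.drop_one, List.prod_cons, List.tail_cons] at hstep
      rw [mul_assoc] at hstep
      have hasc := key_step hr2 haw' hdw' hab hnd hstep
      have h1 := step_cnt hr haw' hab hnd hasc M N
      have h2 := step_cnt' hr haw' hab hnd hasc M N
      rw [List.prod_cons, mul_assoc]
      exact ⟨le_trans ihMN.1 h1, le_trans ihMN.2 h2⟩

section RsetLemmas

variable {n r : ℕ} {lam : ℤ → ℕ}

theorem bnd_pred (hn : 1 ≤ n)
    (hsum : ∑ t ∈ Finset.Icc (1:ℤ) (n:ℤ), (lam t : ℤ) = r) (m : ℤ) :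
    bnd n r lam (m - 1) =
      ((m - 1) / n) * r + ∑ t ∈ Finset.Icc (1 : ℤ) ((m - 1) % n), (lam t : ℤ) := by
  have hn' : (0:ℤ) < n := by exact_mod_cast hn
  set q := (m - 1) / n with hqdef
  set sm := (m - 1) % n with hsdef
  have hdm : (n:ℤ) * q + sm = m - 1 := Int.mul_ediv_add_emod _ _
  have hs0 : 0 ≤ sm := Int.emod_nonneg _ (by omega)
  have hs1 : sm < n := Int.emod_lt_of_pos _ hn'
  unfold bnd
  rcases eq_or_lt_of_le hs0 with hz | hpos
  · -- sm = 0
    have hm2 : m - 1 - 1 = (n - 1) + (q - 1) * n := by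
      have hq : (q - 1) * (n:ℤ) = (n:ℤ) * q - n := by ring
      omega
    have hdiv : (m - 1 - 1) / n = q - 1 := by
      rw [hm2, Int.add_mul_ediv_right _ _ (by omega : (n:ℤ) ≠ 0),
        Int.ediv_eq_zero_of_lt (by omega) (by omega)]
      ring
    have hmod : (m - 1 - 1) % n = n - 1 := by
      rw [hm2, Int.add_mul_emod_self_right, Int.emod_eq_of_lt (by omega) (by omega)]
    rw [hdiv, hmod]
    have he : (n:ℤ) - 1 + 1 = n := by ring
    rw [he, hsum]
    have hicc : Finset.Icc (1:ℤ) sm = ∅ := by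
      apply Finset.Icc_eq_empty
      omega
    rw [hicc, Finset.sum_empty]
    ring
  · -- sm ≥ 1
    have hm2 : m - 1 - 1 = (sm - 1) + q * n := by
      have hq : q * (n:ℤ) = (n:ℤ) * q := by ring
      omega
    have hdiv : (m - 1 - 1) / n = q := by
      rw [hm2, Int.add_mul_ediv_right _ _ (by omega : (n:ℤ) ≠ 0),
        Int.ediv_eq_zero_of_lt (by omega) (by omega)]
      ring
    have hmod : (m - 1 - 1) % n = sm - 1 := by
      rw [hm2, Int.add_mul_emod_self_right, Int.emod_eq_of_lt (by omega) (by omega)]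
    rw [hdiv, hmod]
    have he : sm - 1 + 1 = sm := by ring
    rw [he]

theorem Rset_eq_Ioc (hn : 1 ≤ n)
    (hsum : ∑ t ∈ Finset.Icc (1:ℤ) (n:ℤ), (lam t : ℤ) = r) (m : ℤ) :
    Rset n r lam m = Set.Ioc (bnd n r lam (m - 1)) (bnd n r lam m) := by
  ext a
  rw [bnd_pred hn hsum m]
  rfl

theorem bnd_succ (hn : 1 ≤ n)
    (hsum : ∑ t ∈ Finset.Icc (1:ℤ) (n:ℤ), (lam t : ℤ) = r) (m : ℤ) :
    bnd n r lam (m - 1) ≤ bnd n r lam m := by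
  have hn' : (0:ℤ) < n := by exact_mod_cast hn
  rw [bnd_pred hn hsum m]
  unfold bnd
  have hs0 : 0 ≤ (m - 1) % n := Int.emod_nonneg _ (by omega)
  have he : Finset.Icc (1:ℤ) ((m - 1) % n + 1) =
      insert ((m - 1) % n + 1) (Finset.Icc (1:ℤ) ((m - 1) % n)) := by
    ext x
    simp only [Finset.mem_Icc, Finset.mem_insert]
    omega
  rw [he, Finset.sum_insert (by simp only [Finset.mem_Icc]; omega)]
  have hpos : (0:ℤ) ≤ (lam ((m - 1) % n + 1) : ℤ) := Int.natCast_nonneg _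
  omega

theorem bnd_mono (hn : 1 ≤ n)
    (hsum : ∑ t ∈ Finset.Icc (1:ℤ) (n:ℤ), (lam t : ℤ) = r) {k m : ℤ} (h : k ≤ m) :
    bnd n r lam k ≤ bnd n r lam m := by
  have key : ∀ K : ℕ, bnd n r lam k ≤ bnd n r lam (k + K) := by
    intro K
    induction K with
    | zero => simp
    | succ K ih =>
        have h2 := bnd_succ hn hsum (k + K + 1)
        have he : k + (K:ℤ) + 1 - 1 = k + K := by ring
        rw [he] at h2
        have he2 : k + ((K:ℕ) + 1 : ℕ) = k + (K:ℤ) + 1 := by push_cast; ring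
        rw [he2]
        exact le_trans ih h2
  have h3 := key (m - k).toNat
  rw [Int.toNat_of_nonneg (by omega)] at h3
  have he : k + (m - k) = m := by ring
  rwa [he] at h3

theorem bnd_shift_one (hn : 1 ≤ n)
    (hsum : ∑ t ∈ Finset.Icc (1:ℤ) (n:ℤ), (lam t : ℤ) = r) (m : ℤ) :
    bnd n r lam (m + n) = bnd n r lam m + r := by
  have hn' : (0:ℤ) < n := by exact_mod_cast hn
  unfold bnd
  have he : m + (n:ℤ) - 1 = (m - 1) + 1 * n := by ring
  rw [he, Int.add_mul_ediv_right _ _ (by omega : (n:ℤ) ≠ 0), Int.add_mul_emod_self_right]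
  ring

theorem bnd_shift (hn : 1 ≤ n)
    (hsum : ∑ t ∈ Finset.Icc (1:ℤ) (n:ℤ), (lam t : ℤ) = r) (m k : ℤ) :
    bnd n r lam (m + k * n) = bnd n r lam m + k * r := by
  induction k using Int.induction_on with
  | zero => simp
  | succ k ih =>
      have he : m + ((k:ℤ) + 1) * n = (m + k * n) + n := by ring
      rw [he, bnd_shift_one hn hsum, ih]
      ring
  | pred k ih =>
      have he : m + (-(k:ℤ)) * n = (m + (-(k:ℤ) - 1) * n) + n := by ring
      rw [he, bnd_shift_one hn hsum] at ih
      have hrr : (-(k:ℤ)) * r = (-(k:ℤ) - 1) * r + r := by ring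
      omega

theorem ivt_aux (f : ℤ → ℤ) (a : ℤ) : ∀ K : ℕ, ∀ lo : ℤ, f lo < a → a ≤ f (lo + K) →
    ∃ m, lo < m ∧ m ≤ lo + K ∧ f (m - 1) < a ∧ a ≤ f m := by
  intro K
  induction K with
  | zero => intro lo h1 h2; simp at h2; omega
  | succ K ih =>
      intro lo h1 h2
      by_cases hc : f (lo + K) < a
      · refine ⟨lo + K + 1, by omega, by push_cast; omega, ?_, ?_⟩
        · have he : lo + (K:ℤ) + 1 - 1 = lo + K := by ring
          rw [he]; exact hc
        · have he : lo + (K:ℤ) + 1 = lo + ((K:ℕ) + 1 : ℕ) := by push_cast; ring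
          rw [he]; exact h2
      · push_neg at hc
        obtain ⟨m, hm1, hm2, hm3, hm4⟩ := ih lo h1 hc
        exact ⟨m, hm1, by push_cast; omega, hm3, hm4⟩

theorem bnd_cover_le (hn : 1 ≤ n) (hr : 1 ≤ r)
    (hsum : ∑ t ∈ Finset.Icc (1:ℤ) (n:ℤ), (lam t : ℤ) = r) {a i : ℤ}
    (ha : a ≤ bnd n r lam i) :
    ∃ m, m ≤ i ∧ bnd n r lam (m - 1) < a ∧ a ≤ bnd n r lam m := by
  obtain ⟨K, hKge⟩ : ∃ K : ℕ, bnd n r lam i - a + 1 ≤ (K:ℤ) :=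
    ⟨(bnd n r lam i - a + 1).toNat, Int.self_le_toNat _⟩
  have hKr : (K:ℤ) ≤ K * r := le_mul_of_one_le_right (Int.natCast_nonneg K) (by exact_mod_cast hr)
  set lo : ℤ := i + (-(K:ℤ)) * n with hlo
  have hlo_lt : bnd n r lam lo < a := by
    rw [hlo, bnd_shift hn hsum]
    have h5 : -(K:ℤ) * r = -((K:ℤ) * r) := by ring
    omega
  have hloi : lo ≤ i := by
    have hn' : (0:ℤ) < n := by exact_mod_cast hn
    have h7 : (0:ℤ) ≤ (K:ℤ) * n := mul_nonneg (Int.natCast_nonneg _) (by omega)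
    have h6 : (-(K:ℤ)) * n = -((K:ℤ) * n) := by ring
    omega
  obtain ⟨m, hm1, hm2, hm3, hm4⟩ := ivt_aux (bnd n r lam) a (i - lo).toNat lo hlo_lt
    (by
      have he : lo + ((i - lo).toNat : ℤ) = i := by
        rw [Int.toNat_of_nonneg (by omega)]
        ring
      rw [he]
      exact ha)
  refine ⟨m, ?_, hm3, hm4⟩
  have he : lo + ((i - lo).toNat : ℤ) = i := by
    rw [Int.toNat_of_nonneg (by omega)]
    ring
  omega

theorem bnd_cover_ge (hn : 1 ≤ n) (hr : 1 ≤ r)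
    (hsum : ∑ t ∈ Finset.Icc (1:ℤ) (n:ℤ), (lam t : ℤ) = r) {a j : ℤ}
    (ha : bnd n r lam (j - 1) < a) :
    ∃ m, j ≤ m ∧ bnd n r lam (m - 1) < a ∧ a ≤ bnd n r lam m := by
  obtain ⟨K', hKge⟩ : ∃ K : ℕ, a - bnd n r lam (j - 1) ≤ (K:ℤ) :=
    ⟨(a - bnd n r lam (j - 1)).toNat, Int.self_le_toNat _⟩
  have hKr : (K':ℤ) ≤ K' * r := le_mul_of_one_le_right (Int.natCast_nonneg K') (by exact_mod_cast hr)
  have hhi : a ≤ bnd n r lam ((j - 1) + (K' * n : ℕ)) := by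
    have he : (j - 1) + ((K' * n : ℕ) : ℤ) = (j - 1) + (K':ℤ) * n := by push_cast; ring
    rw [he, bnd_shift hn hsum]
    omega
  obtain ⟨m, hm1, hm2, hm3, hm4⟩ := ivt_aux (bnd n r lam) a (K' * n) (j - 1) ha hhi
  exact ⟨m, by omega, hm3, hm4⟩

theorem bnd_cover (hn : 1 ≤ n) (hr : 1 ≤ r)
    (hsum : ∑ t ∈ Finset.Icc (1:ℤ) (n:ℤ), (lam t : ℤ) = r) (a : ℤ) :
    ∃ m, bnd n r lam (m - 1) < a ∧ a ≤ bnd n r lam m := by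
  obtain ⟨K', hKge⟩ : ∃ K : ℕ, a - bnd n r lam 0 ≤ (K:ℤ) :=
    ⟨(a - bnd n r lam 0).toNat, Int.self_le_toNat _⟩
  have hKr : (K':ℤ) ≤ K' * r := le_mul_of_one_le_right (Int.natCast_nonneg K') (by exact_mod_cast hr)
  have hhi : a ≤ bnd n r lam (0 + (K':ℤ) * n) := by
    rw [bnd_shift hn hsum]
    omega
  obtain ⟨m, hm1, hm2, hm3⟩ := bnd_cover_le hn hr hsum hhi
  exact ⟨m, hm2, hm3⟩

theorem Ioc_disjoint {lam : ℤ → ℕ} (hn : 1 ≤ n)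
    (hsum : ∑ t ∈ Finset.Icc (1:ℤ) (n:ℤ), (lam t : ℤ) = r) {k l : ℤ} (hkl : k ≠ l) :
    Disjoint (Set.Ioc (bnd n r lam (k - 1)) (bnd n r lam k))
      (Set.Ioc (bnd n r lam (l - 1)) (bnd n r lam l)) := by
  rw [Set.disjoint_left]
  rintro x ⟨hx1, hx2⟩ ⟨hy1, hy2⟩
  rcases lt_or_gt_of_ne hkl with h | h
  · have := bnd_mono hn hsum (show k ≤ l - 1 by omega)
    omega
  · have := bnd_mono hn hsum (show l ≤ k - 1 by omega)
    omega

end RsetLemmas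

theorem ncard_finset_biUnion {ι : Type*} (S : Finset ι) (F : ι → Set ℤ)
    (hfin : ∀ i, (F i).Finite)
    (hdisj : ∀ i j, i ≠ j → Disjoint (F i) (F j)) :
    (⋃ i ∈ S, F i).ncard = ∑ i ∈ S, (F i).ncard := by
  classical
  induction S using Finset.induction_on with
  | empty => simp
  | insert _ _ ha ih =>
      rename_i a S_1
      rw [Finset.sum_insert ha, Finset.set_biUnion_insert]
      have hdisj2 : Disjoint (F a) (⋃ x ∈ S_1, F x) := by
        rw [Set.disjoint_left]
        intro x hx hx2
        simp only [Set.mem_iUnion] at hx2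
        obtain ⟨i, hi, hxi⟩ := hx2
        have : a ≠ i := fun h => ha (h ▸ hi)
        exact Set.disjoint_left.mp (hdisj a i this) hx hxi
      have hfin2 : (⋃ x ∈ S_1, F x).Finite :=
        Set.Finite.biUnion S_1.finite_toSet (fun i _ => hfin i)
      rw [Set.ncard_union_eq hdisj2 (hfin a) hfin2, ih]

theorem finsum_ncard {ι : Type*} (F : ι → Set ℤ) (T : Set ℤ) (hT : T.Finite)
    (hsub : ∀ i, F i ⊆ T)
    (hdisj : ∀ i j, i ≠ j → Disjoint (F i) (F j))
    (hcov : ∀ x ∈ T, ∃ i, x ∈ F i) :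
    ∑ᶠ i, (F i).ncard = T.ncard := by
  classical
  have hFfin : ∀ i, (F i).Finite := fun i => hT.subset (hsub i)
  have hsupfin : {i | (F i).Nonempty}.Finite := by
    have hch : ∀ i : {i | (F i).Nonempty}, ∃ x : ℤ, x ∈ F i := fun i => i.2
    choose g hg using hch
    have : Finite T := hT
    have hfin2 : Finite {i | (F i).Nonempty} := by
      refine Finite.of_injective (fun i => (⟨g i, hsub i (hg i)⟩ : T)) ?_
      intro i j hij
      have hgij : g i = g j := congrArg Subtype.val hij
      by_contra hne
      have hdij := hdisj i j (fun h => hne (Subtype.ext h))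
      exact (Set.disjoint_left.mp hdij (hg i)) (hgij ▸ hg j)
    exact Set.toFinite _
  set S : Finset ι := hsupfin.toFinset with hS
  have h1 : ∑ᶠ i, (F i).ncard = ∑ i ∈ S, (F i).ncard := by
    apply finsum_eq_sum_of_support_subset
    intro i hi
    simp only [Function.mem_support] at hi
    have : (F i).Nonempty := Set.nonempty_of_ncard_ne_zero hi
    simp only [hS, Set.Finite.coe_toFinset]
    exact this
  rw [h1, ← ncard_finset_biUnion S F hFfin hdisj]
  congr 1
  apply Set.eq_of_subset_of_subset
  · intro x hx
    simp only [Set.mem_iUnion] at hx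
    obtain ⟨i, _, hxi⟩ := hx
    exact hsub i hxi
  · intro x hx
    obtain ⟨i, hxi⟩ := hcov x hx
    simp only [Set.mem_iUnion]
    exact ⟨i, by simp only [hS, Set.Finite.mem_toFinset]; exact ⟨x, hxi⟩, hxi⟩

section SigmaLemmas

variable {n r : ℕ} {lam mu : ℤ → ℕ} {d : Equiv.Perm ℤ}

theorem JMat_eq_ncard (hn : 1 ≤ n)
    (hsl : ∑ t ∈ Finset.Icc (1:ℤ) (n:ℤ), (lam t : ℤ) = r)
    (hsm : ∑ t ∈ Finset.Icc (1:ℤ) (n:ℤ), (mu t : ℤ) = r) (k l : ℤ) :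
    JMat n r lam mu d k l = (Set.Ioc (bnd n r lam (k - 1)) (bnd n r lam k) ∩
      d '' Set.Ioc (bnd n r mu (l - 1)) (bnd n r mu l)).ncard := by
  unfold JMat
  rw [Rset_eq_Ioc hn hsl, Rset_eq_Ioc hn hsm]

theorem mem_image_Ioc {M N : ℤ} {x : ℤ} :
    x ∈ d '' Set.Ioc M N ↔ M < d⁻¹ x ∧ d⁻¹ x ≤ N := by
  constructor
  · rintro ⟨k, ⟨hk1, hk2⟩, rfl⟩
    rw [Equiv.Perm.inv_apply_self]
    exact ⟨hk1, hk2⟩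
  · rintro ⟨h1, h2⟩
    exact ⟨d⁻¹ x, ⟨h1, h2⟩, d.apply_inv_self x⟩

theorem sigma_lt_eq (hn : 1 ≤ n) (hr : 1 ≤ r)
    (hsl : ∑ t ∈ Finset.Icc (1:ℤ) (n:ℤ), (lam t : ℤ) = r)
    (hsm : ∑ t ∈ Finset.Icc (1:ℤ) (n:ℤ), (mu t : ℤ) = r)
    (hd : Aff r d) {i j : ℤ} (hij : i < j) :
    sigmaOrd (JMat n r lam mu d) i j =
      (Xset d (bnd n r lam i) (bnd n r mu (j - 1))).ncard := by
  classical
  set M := bnd n r lam i with hM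
  set N := bnd n r mu (j - 1) with hN
  set T : Set ℤ := d '' (Xset d M N) with hT
  have hTfin : T.Finite := (Xset_finite hr hd M N).image d
  have hTmem : ∀ x : ℤ, x ∈ T ↔ (x ≤ M ∧ N < d⁻¹ x) := by
    intro x
    constructor
    · rintro ⟨k, ⟨hk1, hk2⟩, rfl⟩
      rw [Equiv.Perm.inv_apply_self]
      exact ⟨hk2, hk1⟩
    · rintro ⟨h1, h2⟩
      exact ⟨d⁻¹ x, ⟨h2, by rwa [d.apply_inv_self]⟩, d.apply_inv_self x⟩
  unfold sigmaOrd
  rw [if_pos hij]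
  set F : ℤ × ℤ → Set ℤ := fun p =>
    if p.1 ≤ i ∧ j ≤ p.2 then
      Set.Ioc (bnd n r lam (p.1 - 1)) (bnd n r lam p.1) ∩
        d '' Set.Ioc (bnd n r mu (p.2 - 1)) (bnd n r mu p.2)
    else ∅ with hF
  have step1 : ∀ p : ℤ × ℤ, (∑ᶠ (_ : p.1 ≤ i ∧ j ≤ p.2), JMat n r lam mu d p.1 p.2)
      = (F p).ncard := by
    intro p
    rw [finsum_eq_if]
    simp only [hF]
    by_cases hc : p.1 ≤ i ∧ j ≤ p.2
    · rw [if_pos hc, if_pos hc, JMat_eq_ncard hn hsl hsm]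
    · rw [if_neg hc, if_neg hc, Set.ncard_empty]
  rw [finsum_congr step1]
  have key := finsum_ncard F T hTfin ?_ ?_ ?_
  · rw [key, hT, Set.ncard_image_of_injective _ d.injective]
  · -- hsub
    intro p x hx
    simp only [hF] at hx
    by_cases hc : p.1 ≤ i ∧ j ≤ p.2
    · rw [if_pos hc] at hx
      obtain ⟨⟨hx1, hx2⟩, hx3⟩ := hx
      rw [mem_image_Ioc] at hx3
      rw [hTmem]
      constructor
      · exact le_trans hx2 (bnd_mono hn hsl hc.1)
      · have h5 := bnd_mono hn hsm (show j - 1 ≤ p.2 - 1 by omega)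
        omega
    · rw [if_neg hc] at hx
      exact absurd hx (Set.notMem_empty x)
  · -- hdisj
    intro p p' hpp
    simp only [hF]
    by_cases hc : p.1 ≤ i ∧ j ≤ p.2
    · by_cases hc' : p'.1 ≤ i ∧ j ≤ p'.2
      · rw [if_pos hc, if_pos hc']
        by_cases h1 : p.1 = p'.1
        · have h2 : p.2 ≠ p'.2 := by
            intro h2
            exact hpp (Prod.ext h1 h2)
          have hd2 : Disjoint (d '' Set.Ioc (bnd n r mu (p.2 - 1)) (bnd n r mu p.2))
              (d '' Set.Ioc (bnd n r mu (p'.2 - 1)) (bnd n r mu p'.2)) :=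
            (Set.disjoint_image_iff d.injective).mpr (Ioc_disjoint hn hsm h2)
          exact Disjoint.mono Set.inter_subset_right Set.inter_subset_right hd2
        · exact Disjoint.mono Set.inter_subset_left Set.inter_subset_left
            (Ioc_disjoint hn hsl h1)
      · rw [if_neg hc']
        exact Set.disjoint_empty _
    · rw [if_neg hc]
      exact Set.empty_disjoint _
  · -- hcov
    intro x hx
    rw [hTmem] at hx
    obtain ⟨hx1, hx2⟩ := hx
    obtain ⟨k, hk1, hk2, hk3⟩ := bnd_cover_le hn hr hsl hx1
    obtain ⟨l, hl1, hl2, hl3⟩ := bnd_cover_ge hn hr hsm hx2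
    refine ⟨(k, l), ?_⟩
    simp only [hF]
    rw [if_pos ⟨hk1, hl1⟩]
    refine ⟨⟨hk2, hk3⟩, ?_⟩
    rw [mem_image_Ioc]
    exact ⟨hl2, hl3⟩

theorem sigma_gt_eq (hn : 1 ≤ n) (hr : 1 ≤ r)
    (hsl : ∑ t ∈ Finset.Icc (1:ℤ) (n:ℤ), (lam t : ℤ) = r)
    (hsm : ∑ t ∈ Finset.Icc (1:ℤ) (n:ℤ), (mu t : ℤ) = r)
    (hd : Aff r d) {i j : ℤ} (hij : j < i) :
    sigmaOrd (JMat n r lam mu d) i j =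
      (Xset' d (bnd n r lam (i - 1)) (bnd n r mu j)).ncard := by
  classical
  set M := bnd n r lam (i - 1) with hM
  set N := bnd n r mu j with hN
  set T : Set ℤ := d '' (Xset' d M N) with hT
  have hTfin : T.Finite := (Xset'_finite hr hd M N).image d
  have hTmem : ∀ x : ℤ, x ∈ T ↔ (M < x ∧ d⁻¹ x ≤ N) := by
    intro x
    constructor
    · rintro ⟨k, ⟨hk1, hk2⟩, rfl⟩
      rw [Equiv.Perm.inv_apply_self]
      exact ⟨hk2, hk1⟩
    · rintro ⟨h1, h2⟩
      exact ⟨d⁻¹ x, ⟨h2, by rwa [d.apply_inv_self]⟩, d.apply_inv_self x⟩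
  unfold sigmaOrd
  rw [if_neg (by omega)]
  set F : ℤ × ℤ → Set ℤ := fun p =>
    if i ≤ p.1 ∧ p.2 ≤ j then
      Set.Ioc (bnd n r lam (p.1 - 1)) (bnd n r lam p.1) ∩
        d '' Set.Ioc (bnd n r mu (p.2 - 1)) (bnd n r mu p.2)
    else ∅ with hF
  have step1 : ∀ p : ℤ × ℤ, (∑ᶠ (_ : i ≤ p.1 ∧ p.2 ≤ j), JMat n r lam mu d p.1 p.2)
      = (F p).ncard := by
    intro p
    rw [finsum_eq_if]
    simp only [hF]
    by_cases hc : i ≤ p.1 ∧ p.2 ≤ j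
    · rw [if_pos hc, if_pos hc, JMat_eq_ncard hn hsl hsm]
    · rw [if_neg hc, if_neg hc, Set.ncard_empty]
  rw [finsum_congr step1]
  have key := finsum_ncard F T hTfin ?_ ?_ ?_
  · rw [key, hT, Set.ncard_image_of_injective _ d.injective]
  · intro p x hx
    simp only [hF] at hx
    by_cases hc : i ≤ p.1 ∧ p.2 ≤ j
    · rw [if_pos hc] at hx
      obtain ⟨⟨hx1, hx2⟩, hx3⟩ := hx
      rw [mem_image_Ioc] at hx3
      rw [hTmem]
      constructor
      · have h5 := bnd_mono hn hsl (show i - 1 ≤ p.1 - 1 by omega)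
        omega
      · exact le_trans hx3.2 (bnd_mono hn hsm hc.2)
    · rw [if_neg hc] at hx
      exact absurd hx (Set.notMem_empty x)
  · intro p p' hpp
    simp only [hF]
    by_cases hc : i ≤ p.1 ∧ p.2 ≤ j
    · by_cases hc' : i ≤ p'.1 ∧ p'.2 ≤ j
      · rw [if_pos hc, if_pos hc']
        by_cases h1 : p.1 = p'.1
        · have h2 : p.2 ≠ p'.2 := by
            intro h2
            exact hpp (Prod.ext h1 h2)
          have hd2 : Disjoint (d '' Set.Ioc (bnd n r mu (p.2 - 1)) (bnd n r mu p.2))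
              (d '' Set.Ioc (bnd n r mu (p'.2 - 1)) (bnd n r mu p'.2)) :=
            (Set.disjoint_image_iff d.injective).mpr (Ioc_disjoint hn hsm h2)
          exact Disjoint.mono Set.inter_subset_right Set.inter_subset_right hd2
        · exact Disjoint.mono Set.inter_subset_left Set.inter_subset_left
            (Ioc_disjoint hn hsl h1)
      · rw [if_neg hc']
        exact Set.disjoint_empty _
    · rw [if_neg hc]
      exact Set.empty_disjoint _
  · intro x hx
    rw [hTmem] at hx
    obtain ⟨hx1, hx2⟩ := hx
    obtain ⟨k, hk1, hk2, hk3⟩ := bnd_cover_ge hn hr hsl hx1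
    obtain ⟨l, hl1, hl2, hl3⟩ := bnd_cover_le hn hr hsm hx2
    refine ⟨(k, l), ?_⟩
    simp only [hF]
    rw [if_pos ⟨hk1, hl1⟩]
    refine ⟨⟨hk2, hk3⟩, ?_⟩
    rw [mem_image_Ioc]
    exact ⟨hl2, hl3⟩

theorem roM_eq (hn : 1 ≤ n) (hr : 1 ≤ r)
    (hsl : ∑ t ∈ Finset.Icc (1:ℤ) (n:ℤ), (lam t : ℤ) = r)
    (hsm : ∑ t ∈ Finset.Icc (1:ℤ) (n:ℤ), (mu t : ℤ) = r) (k : ℤ) :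
    roM (JMat n r lam mu d) k =
      (Set.Ioc (bnd n r lam (k - 1)) (bnd n r lam k)).ncard := by
  classical
  unfold roM
  set T : Set ℤ := Set.Ioc (bnd n r lam (k - 1)) (bnd n r lam k) with hT
  set F : ℤ → Set ℤ := fun l =>
    T ∩ d '' Set.Ioc (bnd n r mu (l - 1)) (bnd n r mu l) with hF
  have step1 : ∀ l : ℤ, JMat n r lam mu d k l = (F l).ncard := by
    intro l
    rw [JMat_eq_ncard hn hsl hsm, hF]
  rw [finsum_congr step1]
  apply finsum_ncard F T (Set.finite_Ioc _ _)
  · intro l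
    exact Set.inter_subset_left
  · intro l l' hll
    have hd2 : Disjoint (d '' Set.Ioc (bnd n r mu (l - 1)) (bnd n r mu l))
        (d '' Set.Ioc (bnd n r mu (l' - 1)) (bnd n r mu l')) :=
      (Set.disjoint_image_iff d.injective).mpr (Ioc_disjoint hn hsm hll)
    exact Disjoint.mono Set.inter_subset_right Set.inter_subset_right hd2
  · intro x hx
    obtain ⟨l, hl1, hl2⟩ := bnd_cover hn hr hsm (d⁻¹ x)
    refine ⟨l, hx, ?_⟩
    rw [mem_image_Ioc]
    exact ⟨hl1, hl2⟩

theorem coM_eq (hn : 1 ≤ n) (hr : 1 ≤ r)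
    (hsl : ∑ t ∈ Finset.Icc (1:ℤ) (n:ℤ), (lam t : ℤ) = r)
    (hsm : ∑ t ∈ Finset.Icc (1:ℤ) (n:ℤ), (mu t : ℤ) = r) (l : ℤ) :
    coM (JMat n r lam mu d) l =
      (Set.Ioc (bnd n r mu (l - 1)) (bnd n r mu l)).ncard := by
  classical
  unfold coM
  set T : Set ℤ := d '' Set.Ioc (bnd n r mu (l - 1)) (bnd n r mu l) with hT
  set F : ℤ → Set ℤ := fun k =>
    Set.Ioc (bnd n r lam (k - 1)) (bnd n r lam k) ∩ T with hF
  have step1 : ∀ k : ℤ, JMat n r lam mu d k l = (F k).ncard := by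
    intro k
    rw [JMat_eq_ncard hn hsl hsm, hF]
  rw [finsum_congr step1]
  have key := finsum_ncard F T ((Set.finite_Ioc _ _).image d) ?_ ?_ ?_
  · rw [key, hT, Set.ncard_image_of_injective _ d.injective]
  · intro k
    exact Set.inter_subset_right
  · intro k k' hkk
    exact Disjoint.mono Set.inter_subset_left Set.inter_subset_left
      (Ioc_disjoint hn hsl hkk)
  · intro x hx
    obtain ⟨k, hk1, hk2⟩ := bnd_cover hn hr hsl x
    exact ⟨k, ⟨hk1, hk2⟩, hx⟩

end SigmaLemmas

end JAux

/-- if `y, d ∈ D^Δ_{λ,μ}` with `y ≤ d` in the Bruhat order, then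
`B = J_Δ(λ,y,μ)` and `A = J_Δ(λ,d,μ)` satisfy `B ⊑ A`: all `σ_{i,j}(B) ≤ σ_{i,j}(A)`,
`ro(B) = ro(A)` and `co(B) = co(A)`. -/
theorem JMat_sq_le_of_bruhat_le (n r : ℕ) (hn : 1 ≤ n) (hr : 1 ≤ r)
    (lam mu : ℤ → ℕ) (hlam : lam ∈ LambdaSet n r) (hmu : mu ∈ LambdaSet n r)
    (y d : Equiv.Perm ℤ) (hy : y ∈ DRep2 n r lam mu) (hd : d ∈ DRep2 n r lam mu)
    (hle : abruhatLE r y d) :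
    (∀ i j : ℤ, i ≠ j →
      sigmaOrd (JMat n r lam mu y) i j ≤ sigmaOrd (JMat n r lam mu d) i j) ∧
    roM (JMat n r lam mu y) = roM (JMat n r lam mu d) ∧
    coM (JMat n r lam mu y) = coM (JMat n r lam mu d) := by
  classical
  have hay : JAux.Aff r y := fun i => hy.1.1 i
  have had : JAux.Aff r d := fun i => hd.1.1 i
  have hsl : ∑ t ∈ Finset.Icc (1:ℤ) (n:ℤ), (lam t : ℤ) = r := by exact_mod_cast hlam.2
  have hsm : ∑ t ∈ Finset.Icc (1:ℤ) (n:ℤ), (mu t : ℤ) = r := by exact_mod_cast hmu.2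
  obtain ⟨hsh, hbr⟩ := hle
  obtain ⟨l, hlT, hprod, hlen⟩ := hbr
  have hcnt : ∀ M N : ℤ, (JAux.Xset y M N).ncard ≤ (JAux.Xset d M N).ncard ∧
      (JAux.Xset' y M N).ncard ≤ (JAux.Xset' d M N).ncard := by
    rcases eq_or_lt_of_le hr with hr1 | hr2
    · -- r = 1 forces y = d
      have hl0 : l = [] := by
        cases l with
        | nil => rfl
        | cons t l' =>
            obtain ⟨a, c, hac, hnd, _⟩ := JAux.TSet_spec (hlT t (by simp))
            exfalso
            apply hnd
            have : (r:ℤ) = 1 := by exact_mod_cast hr1.symm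
            rw [this]
            exact one_dvd _
      rw [hl0] at hprod
      simp only [List.prod_nil, one_mul] at hprod
      rw [hsh] at hprod
      have hyd : d = y := mul_left_cancel hprod
      intro M N
      rw [hyd]
      exact ⟨le_rfl, le_rfl⟩
    · have hr2' : 2 ≤ r := hr2
      rw [hsh] at hlen hprod
      set s := shiftIdx r d with hsdef
      set y0 := (rhoP ^ s)⁻¹ * y with hy0
      have hay0 : JAux.Aff r y0 :=
        JAux.aff_mul (JAux.aff_inv (JAux.aff_rhoP_zpow s)) hay
      have hrho_inv_apply : ∀ x : ℤ, (rhoP ^ s)⁻¹ x = x - s := by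
        intro x
        rw [← zpow_neg, JAux.rhoP_zpow_apply]
        ring
      have hdvd := JAux.dvd_disp hr hay
      have hsy : shiftIdx r y = s := hsh
      have hs_eq : s = JAux.disp r y / r := hsy.symm
      have hdy0 : JAux.disp r y0 = 0 := by
        rw [hy0, JAux.disp_mul hr (JAux.aff_inv (JAux.aff_rhoP_zpow s)) hay]
        have h1 : (rhoP ^ s)⁻¹ = rhoP ^ (-s) := (zpow_neg rhoP s).symm
        rw [h1, JAux.disp_rhoP_zpow hr]
        have h3 : (JAux.disp r y / r) * r = JAux.disp r y := Int.ediv_mul_cancel hdvd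
        have h4 : (-s) * (r:ℤ) = -(s * r) := by ring
        rw [hs_eq] at h4 ⊢
        omega
      have hXy : ∀ (w : Equiv.Perm ℤ) (M N : ℤ),
          JAux.Xset w M N = JAux.Xset ((rhoP ^ s)⁻¹ * w) (M - s) N := by
        intro w M N
        ext k
        simp only [JAux.Xset, Set.mem_setOf_eq, Equiv.Perm.mul_apply]
        rw [hrho_inv_apply]
        omega
      have hXy' : ∀ (w : Equiv.Perm ℤ) (M N : ℤ),
          JAux.Xset' w M N = JAux.Xset' ((rhoP ^ s)⁻¹ * w) (M - s) N := by
        intro w M N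
        ext k
        simp only [JAux.Xset', Set.mem_setOf_eq, Equiv.Perm.mul_apply]
        rw [hrho_inv_apply]
        omega
      intro M N
      have hc := JAux.chain_cnt hr2' hay0 hdy0 l hlT hlen (M - s) N
      rw [← hprod] at hc
      constructor
      · rw [hXy y M N, hXy d M N]
        exact hc.1
      · rw [hXy' y M N, hXy' d M N]
        exact hc.2
  refine ⟨?_, ?_, ?_⟩
  · intro i j hij
    rcases lt_or_gt_of_ne hij with h | h
    · rw [JAux.sigma_lt_eq hn hr hsl hsm hay h, JAux.sigma_lt_eq hn hr hsl hsm had h]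
      exact (hcnt _ _).1
    · rw [JAux.sigma_gt_eq hn hr hsl hsm hay h, JAux.sigma_gt_eq hn hr hsl hsm had h]
      exact (hcnt _ _).2
  · funext k
    rw [JAux.roM_eq (d := y) hn hr hsl hsm k, JAux.roM_eq (d := d) hn hr hsl hsm k]
  · funext k
    rw [JAux.coM_eq (d := y) hn hr hsl hsm k, JAux.coM_eq (d := d) hn hr hsl hsm k]
end

section
/- Assume N > n ≥ 1. For every A ∈ Θ_Δ(n,r), the matrix Ã ∈ Θ_Δ(N) satisfies σ(Ã) = r and Ã is aperiodic; that is, Ã ∈ Θ_Δ(N,r) and for every integer l ≠ 0 there exists 1 ≤ i ≤ N with ã_{i,i+l} = 0. -/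
open scoped Classical

lemma aux_div {b q s : ℤ} (hb : 0 < b) (h0 : 0 ≤ s) (hs : s < b) :
    (q * b + s) / b = q := by
  rw [add_comm, Int.add_mul_ediv_right _ _ hb.ne', Int.ediv_eq_zero_of_lt h0 hs, zero_add]

lemma aux_mod {b q s : ℤ} (hb : 0 < b) (h0 : 0 ≤ s) (hs : s < b) :
    (q * b + s) % b = s := by
  rw [add_comm, mul_comm, Int.add_mul_emod_self_left, Int.emod_eq_of_lt h0 hs]

lemma aux_R1 {n N l' : ℤ} (hn0 : 0 < n) (hN0 : 0 < N) (h : (l' - 1) % N + 1 ≤ n) :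
    ((((l' - 1) % N + 1) + ((l' - 1) / N) * n - 1) % n = (l' - 1) % N) ∧
    ((((l' - 1) % N + 1) + ((l' - 1) / N) * n - 1) / n = (l' - 1) / N) := by
  have h0 : 0 ≤ (l' - 1) % N := Int.emod_nonneg _ hN0.ne'
  have h1 : (l' - 1) % N < n := by omega
  have e : ((l' - 1) % N + 1) + ((l' - 1) / N) * n - 1
      = ((l' - 1) / N) * n + (l' - 1) % N := by ring
  rw [e, aux_mod hn0 h0 h1, aux_div hn0 h0 h1]
  exact ⟨rfl, rfl⟩

lemma aux_R2 {n N x : ℤ} (hn0 : 0 < n) (hN0 : 0 < N) (hnN : n < N) :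
    ((((x - 1) / n) * N + ((x - 1) % n + 1) - 1) % N = (x - 1) % n) ∧
    ((((x - 1) / n) * N + ((x - 1) % n + 1) - 1) / N = (x - 1) / n) := by
  have h0 : 0 ≤ (x - 1) % n := Int.emod_nonneg _ hn0.ne'
  have h1 : (x - 1) % n < N := lt_trans (Int.emod_lt_of_pos _ hn0) hnN
  have e : ((x - 1) / n) * N + ((x - 1) % n + 1) - 1
      = ((x - 1) / n) * N + (x - 1) % n := by ring
  rw [e, aux_mod hN0 h0 h1, aux_div hN0 h0 h1]
  exact ⟨rfl, rfl⟩

/-- for `N > n` and `A ∈ Θ_Δ(n,r)`, the matrix `Ã` lies in `Θ_Δ(N,r)`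
and is aperiodic. -/
theorem tilde_mem_Theta_aperiodic (n N r : ℕ) (hn : 1 ≤ n) (hnN : n < N)
    (A : ℤ → ℤ → ℕ) (hA : A ∈ ThetaSet n) (hs : sigmaTot n A = r) :
    tildeM n N A ∈ ThetaSet N ∧ sigmaTot N (tildeM n N A) = r ∧
    ∀ l : ℤ, l ≠ 0 → ∃ i : ℤ, 1 ≤ i ∧ i ≤ (N : ℤ) ∧ tildeM n N A i (i + l) = 0 := by
  obtain ⟨hperA, hrow, hcol⟩ := hA
  have hn0 : (0:ℤ) < (n:ℤ) := by omega
  have hN0 : (0:ℤ) < (N:ℤ) := by omega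
  have hnN' : (n:ℤ) < (N:ℤ) := by omega
  have key : ∀ i j : ℤ, tildeM n N A i j =
      if ((i-1) % N + 1 ≤ (n:ℤ)) ∧ ((j - ((i-1)/N)*N - 1) % N + 1 ≤ (n:ℤ)) then
        A ((i-1) % N + 1)
          (((j - ((i-1)/N)*N - 1) % N + 1) + ((j - ((i-1)/N)*N - 1) / N) * n)
      else 0 := fun i j => rfl
  have hzero : ∀ i j : ℤ, tildeM n N A i j ≠ 0 →
      ((i-1) % N + 1 ≤ (n:ℤ)) ∧ ((j - ((i-1)/N)*N - 1) % N + 1 ≤ (n:ℤ)) ∧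
      A ((i-1) % N + 1)
        (((j - ((i-1)/N)*N - 1) % N + 1) + ((j - ((i-1)/N)*N - 1) / N) * n) ≠ 0 := by
    intro i j h
    rw [key] at h
    split_ifs at h with hc
    · exact ⟨hc.1, hc.2, h⟩
    · exact absurd rfl h
  have hper' : ∀ i j : ℤ, tildeM n N A (i + N) (j + N) = tildeM n N A i j := by
    intro i j
    rw [key, key]
    have h1 : i + (N:ℤ) - 1 = (i - 1) + 1 * N := by ring
    have hm : (i + (N:ℤ) - 1) % N = (i - 1) % N := by rw [h1, Int.add_mul_emod_self_right]
    have hd : (i + (N:ℤ) - 1) / N = (i - 1) / N + 1 := by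
      rw [h1, Int.add_mul_ediv_right _ _ hN0.ne']
    rw [hm, hd]
    have h2 : j + (N:ℤ) - ((i-1)/N + 1) * N = j - ((i-1)/N) * N := by ring
    rw [h2]
  have rowfin : ∀ i : ℤ, {j : ℤ | tildeM n N A i j ≠ 0}.Finite := by
    intro i
    by_cases hk : (i-1) % N + 1 ≤ (n:ℤ)
    · apply Set.Finite.subset (((hrow ((i-1) % N + 1)).image
        (fun x => ((i-1)/N) * (N:ℤ) + (((x-1)/n) * N + ((x-1) % n + 1)))))
      intro j hj
      obtain ⟨h1, h2, h3⟩ := hzero i j hj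
      refine ⟨_, h3, ?_⟩
      obtain ⟨hm, hd⟩ := aux_R1 hn0 hN0 h2
      simp only
      rw [hm, hd]
      have hre := Int.mul_ediv_add_emod (j - ((i-1)/N)*(N:ℤ) - 1) (N:ℤ)
      linarith
    · apply Set.Finite.subset Set.finite_empty
      intro j hj
      exact absurd (hzero i j hj).1 hk
  have colfin : ∀ j : ℤ, {i : ℤ | tildeM n N A i j ≠ 0}.Finite := by
    intro j
    apply Set.Finite.subset (Set.Finite.biUnion (Finset.Icc (1:ℤ) (n:ℤ)).finite_toSet
      (fun k _ => ((hrow k).image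
        (fun x => j - (((x-1)/n) * (N:ℤ) + ((x-1) % n + 1)) + k))))
    intro i hi
    obtain ⟨h1, h2, h3⟩ := hzero i j hi
    have hk1 : 1 ≤ (i-1) % N + 1 := by
      have := Int.emod_nonneg (i-1) hN0.ne'
      omega
    apply Set.mem_biUnion (show ((i-1) % N + 1) ∈ ((Finset.Icc (1:ℤ) (n:ℤ)) : Set ℤ) by
      simp only [Finset.coe_Icc, Set.mem_Icc]; exact ⟨hk1, h1⟩)
    refine ⟨_, h3, ?_⟩
    obtain ⟨hm, hd⟩ := aux_R1 hn0 hN0 h2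
    simp only
    rw [hm, hd]
    have hre := Int.mul_ediv_add_emod (j - ((i-1)/N)*(N:ℤ) - 1) (N:ℤ)
    have hre2 := Int.mul_ediv_add_emod (i - 1) (N:ℤ)
    linarith
  have entry : ∀ j : ℤ, ∀ i ∈ Finset.Icc (1:ℤ) (N:ℤ), tildeM n N A i j =
      if i ≤ (n:ℤ) ∧ ((j-1) % N + 1 ≤ (n:ℤ)) then
        A i (((j-1) % N + 1) + ((j-1)/N) * n) else 0 := by
    intro j i hi
    rw [Finset.mem_Icc] at hi
    have hd : (i - 1) / N = 0 := Int.ediv_eq_zero_of_lt (by omega) (by omega)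
    have hm : (i - 1) % N = i - 1 := Int.emod_eq_of_lt (by omega) (by omega)
    have e1 : j - 0 * (N:ℤ) = j := by ring
    have e2 : i - 1 + 1 = i := by ring
    rw [key, hd, e1, hm, e2]
  have hFsupp : ∀ j : ℤ, ((j-1) % N + 1 ≤ (n:ℤ)) →
      j ∈ Set.range (fun x : ℤ => ((x-1)/n) * (N:ℤ) + ((x-1) % n + 1)) := by
    intro j hj
    refine ⟨((j-1) % N + 1) + ((j-1)/N) * n, ?_⟩
    obtain ⟨hm, hd⟩ := aux_R1 hn0 hN0 hj
    simp only
    rw [hm, hd]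
    have hre := Int.mul_ediv_add_emod (j-1) (N:ℤ)
    linarith
  have einj : Function.Injective (fun x : ℤ => ((x-1)/n) * (N:ℤ) + ((x-1) % n + 1)) := by
    intro x y hxy
    simp only at hxy
    obtain ⟨hmx, hdx⟩ := aux_R2 (x := x) hn0 hN0 hnN'
    obtain ⟨hmy, hdy⟩ := aux_R2 (x := y) hn0 hN0 hnN'
    have h1 : (x-1) % n = (y-1) % n := by rw [← hmx, ← hmy, hxy]
    have h2 : (x-1) / n = (y-1) / n := by rw [← hdx, ← hdy, hxy]
    have ex := Int.mul_ediv_add_emod (x-1) (n:ℤ)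
    have ey := Int.mul_ediv_add_emod (y-1) (n:ℤ)
    rw [h1, h2] at ex
    linarith
  have hFe : ∀ x : ℤ, (∑ i ∈ Finset.Icc (1:ℤ) (N:ℤ),
        tildeM n N A i (((x-1)/n) * (N:ℤ) + ((x-1) % n + 1)))
      = ∑ i ∈ Finset.Icc (1:ℤ) (n:ℤ), A i x := by
    intro x
    obtain ⟨hm, hd⟩ := aux_R2 (x := x) hn0 hN0 hnN'
    have hcond : (((x-1)/n) * (N:ℤ) + ((x-1) % n + 1) - 1) % N + 1 ≤ (n:ℤ) := by
      rw [hm]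
      have := Int.emod_lt_of_pos (x-1) hn0
      omega
    have hval : (((x-1)/n) * (N:ℤ) + ((x-1) % n + 1) - 1) % N + 1
        + ((((x-1)/n) * (N:ℤ) + ((x-1) % n + 1) - 1) / N) * n = x := by
      rw [hm, hd]
      have := Int.mul_ediv_add_emod (x-1) (n:ℤ)
      linarith
    have step1 : (∑ i ∈ Finset.Icc (1:ℤ) (N:ℤ),
          tildeM n N A i (((x-1)/n) * (N:ℤ) + ((x-1) % n + 1)))
        = ∑ i ∈ Finset.Icc (1:ℤ) (N:ℤ), (if i ≤ (n:ℤ) then A i x else 0) := by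
      refine Finset.sum_congr rfl (fun i hi => ?_)
      rw [entry _ i hi, hval]
      by_cases hii : i ≤ (n:ℤ)
      · rw [if_pos ⟨hii, hcond⟩, if_pos hii]
      · rw [if_neg (fun hc => hii hc.1), if_neg hii]
    rw [step1, ← Finset.sum_subset (Finset.Icc_subset_Icc_right hnN'.le)
        (fun i hi hni => if_neg (fun hle => hni
          (Finset.mem_Icc.mpr ⟨(Finset.mem_Icc.mp hi).1, hle⟩)))]
    exact Finset.sum_congr rfl (fun i hi => if_pos (Finset.mem_Icc.mp hi).2)
  have hsigma : sigmaTot N (tildeM n N A) = r := by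
    have h1 : sigmaTot N (tildeM n N A)
        = ∑ᶠ j, ∑ i ∈ Finset.Icc (1:ℤ) (N:ℤ), tildeM n N A i j := rfl
    have h2 : (fun j => ∑ i ∈ Finset.Icc (1:ℤ) (N:ℤ), tildeM n N A i j) =
        Set.indicator (Set.range (fun x : ℤ => ((x-1)/n) * (N:ℤ) + ((x-1) % n + 1)))
          (fun j => ∑ i ∈ Finset.Icc (1:ℤ) (N:ℤ), tildeM n N A i j) := by
      funext j
      by_cases hj : j ∈ Set.range (fun x : ℤ => ((x-1)/n) * (N:ℤ) + ((x-1) % n + 1))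
      · rw [Set.indicator_of_mem hj]
      · rw [Set.indicator_of_notMem hj]
        refine Finset.sum_eq_zero (fun i hi => ?_)
        rw [entry j i hi, if_neg]
        rintro ⟨-, hc⟩
        exact hj (hFsupp j hc)
    rw [h1, h2, ← finsum_mem_def, finsum_mem_range einj, finsum_congr hFe]
    exact hs
  refine ⟨⟨hper', rowfin, colfin⟩, hsigma, ?_⟩
  intro l _
  refine ⟨N, by omega, le_refl _, ?_⟩
  rw [key, if_neg]
  rintro ⟨hc, -⟩
  have hmm : ((N:ℤ) - 1) % N = (N:ℤ) - 1 := Int.emod_eq_of_lt (by omega) (by omega)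
  omega
end

section
/- The relation ⊑ is a partial order on Θ̃_Δ(n). In particular (antisymmetry), if A, B ∈ Θ̃_Δ(n) satisfy B ⊑ A and A ⊑ B, then A = B. -/
open scoped Classical

-- aux 1: periodicity for all k : ℤ
theorem per_all {n : ℕ} {A : ℤ → ℤ → ℤ} (hA : ∀ i j : ℤ, A (i + n) (j + n) = A i j)
    (k s t : ℤ) : A (s + k * n) (t + k * n) = A s t := by
  induction k using Int.induction_on with
  | zero => simp
  | succ m ih =>
      have := hA (s + m * n) (t + m * n)
      have e1 : s + (m + 1 : ℤ) * n = s + m * n + n := by ring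
      have e2 : t + (m + 1 : ℤ) * n = t + m * n + n := by ring
      rw [e1, e2, this, ih]
  | pred m ih =>
      have h := hA (s + (-(m:ℤ) - 1) * n) (t + (-(m:ℤ) - 1) * n)
      have e1 : s + (-(m:ℤ) - 1) * n + n = s + (-(m:ℤ)) * n := by ring
      have e2 : t + (-(m:ℤ) - 1) * n + n = t + (-(m:ℤ)) * n := by ring
      rw [e1, e2] at h
      rw [← h, ih]

-- aux 2: bound on band width
theorem band_bound {n : ℕ} (hn : 1 ≤ n) {A : ℤ → ℤ → ℤ} (hA : A ∈ ThetaTSet n) :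
    ∃ M : ℤ, 0 ≤ M ∧ ∀ s t : ℤ, A s t ≠ 0 → |t - s| ≤ M := by
  obtain ⟨-, hper, hrow, -⟩ := hA
  set M : ℤ := ∑ s0 ∈ Finset.Icc (1 : ℤ) (n : ℤ), ∑ t ∈ (hrow s0).toFinset, |t - s0| with hM
  have hMnn : 0 ≤ M := Finset.sum_nonneg fun s0 _ =>
    Finset.sum_nonneg fun t _ => abs_nonneg _
  refine ⟨M, hMnn, fun s t hst => ?_⟩
  have hn' : (0 : ℤ) < (n : ℤ) := by exact_mod_cast hn
  set k : ℤ := (s - 1) / n with hk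
  set s0 : ℤ := s - k * n with hs0
  have hs0mem : s0 ∈ Finset.Icc (1 : ℤ) (n : ℤ) := by
    have h1 := Int.emod_nonneg (s - 1) (by omega : (n : ℤ) ≠ 0)
    have h2 := Int.emod_lt_of_pos (s - 1) hn'
    have h3 := Int.emod_add_mul_ediv (s - 1) (n : ℤ)
    have h4 : (n : ℤ) * ((s - 1) / (n : ℤ)) = ((s - 1) / (n : ℤ)) * (n : ℤ) := mul_comm _ _
    simp only [Finset.mem_Icc, hs0, hk]
    omega
  have hval : A s0 (t - k * n) ≠ 0 := by
    have := per_all hper k s0 (t - k * n)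
    have e1 : s0 + k * n = s := by rw [hs0]; ring
    have e2 : t - k * n + k * n = t := by ring
    rw [e1, e2] at this
    rwa [← this]
  have htmem : (t - k * n) ∈ (hrow s0).toFinset := by
    simp [Set.Finite.mem_toFinset]; exact hval
  have h1 : |t - k * n - s0| ≤ ∑ t' ∈ (hrow s0).toFinset, |t' - s0| :=
    Finset.single_le_sum (f := fun t' => |t' - s0|) (fun x _ => abs_nonneg _) htmem
  have h2 : ∑ t' ∈ (hrow s0).toFinset, |t' - s0| ≤ M := by
    rw [hM]
    exact Finset.single_le_sum
      (f := fun s1 => ∑ t' ∈ (hrow s1).toFinset, |t' - s1|)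
      (fun x _ => Finset.sum_nonneg fun t' _ => abs_nonneg _) hs0mem
  have e3 : t - k * n - s0 = t - s := by rw [hs0]; ring
  rw [e3] at h1
  omega

-- aux 3: conditional finsum as a finset sum
theorem finsum_cond_eq_sum {M : Type*} [AddCommMonoid M] (f : ℤ × ℤ → M) (P : ℤ × ℤ → Prop)
    [DecidablePred P] (T : Finset (ℤ × ℤ)) (h : ∀ p, P p → f p ≠ 0 → p ∈ T) :
    (∑ᶠ (p : ℤ × ℤ) (_ : P p), f p) = ∑ p ∈ T, if P p then f p else 0 := by
  have h0 : (∑ᶠ (p : ℤ × ℤ) (_ : P p), f p) = ∑ᶠ p ∈ {p | P p}, f p := rfl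
  rw [h0, finsum_mem_def, finsum_eq_sum_of_support_subset]
  · refine Finset.sum_congr rfl fun p _ => ?_
    by_cases hP : P p <;> simp [Set.indicator_apply, hP]
  · intro p hp
    simp only [Function.mem_support, Set.indicator_apply, ne_eq] at hp
    by_cases hP : P p
    · exact h p hP (by simpa [hP] using hp)
    · simp [hP] at hp


theorem extract_lt (A : ℤ → ℤ → ℤ) (M i j : ℤ)
    (hband : ∀ s t : ℤ, A s t ≠ 0 → |t - s| ≤ M) (hij : i < j) :
    sigmaOrdZ A i j - sigmaOrdZ A (i-1) j - sigmaOrdZ A i (j+1)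
      + sigmaOrdZ A (i-1) (j+1) = A i j := by
  set T : Finset (ℤ × ℤ) :=
    insert (i, j) (Finset.Icc (j - M) i ×ˢ Finset.Icc j (i + M)) with hT
  have key : ∀ i' j' : ℤ, i - 1 ≤ i' → i' ≤ i → j ≤ j' → j' ≤ j + 1 →
      sigmaOrdZ A i' j' = ∑ p ∈ T, if p.1 ≤ i' ∧ j' ≤ p.2 then A p.1 p.2 else 0 := by
    intro i' j' h1 h2 h3 h4
    have hij' : i' < j' := by omega
    rw [sigmaOrdZ, if_pos hij']
    refine finsum_cond_eq_sum (fun p => A p.1 p.2) _ T ?_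
    rintro ⟨s, t⟩ ⟨hs, ht⟩ hne
    have hb := hband s t hne
    rw [abs_le] at hb
    simp only [hT, Finset.mem_insert, Finset.mem_product, Finset.mem_Icc]
    right
    constructor <;> constructor <;> omega
  rw [key i j (by omega) (by omega) (by omega) (by omega),
      key (i-1) j (by omega) (by omega) (by omega) (by omega),
      key i (j+1) (by omega) (by omega) (by omega) (by omega),
      key (i-1) (j+1) (by omega) (by omega) (by omega) (by omega),
      ← Finset.sum_sub_distrib, ← Finset.sum_sub_distrib, ← Finset.sum_add_distrib]
  have hpt : ∀ p ∈ T,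
      ((if p.1 ≤ i ∧ j ≤ p.2 then A p.1 p.2 else 0) -
        (if p.1 ≤ i - 1 ∧ j ≤ p.2 then A p.1 p.2 else 0) -
        (if p.1 ≤ i ∧ j + 1 ≤ p.2 then A p.1 p.2 else 0) +
        (if p.1 ≤ i - 1 ∧ j + 1 ≤ p.2 then A p.1 p.2 else 0)) =
      if p = (i, j) then A p.1 p.2 else 0 := by
    rintro ⟨s, t⟩ -
    simp only [Prod.mk.injEq]
    split_ifs <;> omega
  rw [Finset.sum_congr rfl hpt, Finset.sum_ite_eq' T (i, j) (fun p => A p.1 p.2),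
      if_pos (hT ▸ Finset.mem_insert_self _ _)]

theorem extract_gt (A : ℤ → ℤ → ℤ) (M i j : ℤ)
    (hband : ∀ s t : ℤ, A s t ≠ 0 → |t - s| ≤ M) (hij : j < i) :
    sigmaOrdZ A i j - sigmaOrdZ A (i+1) j - sigmaOrdZ A i (j-1)
      + sigmaOrdZ A (i+1) (j-1) = A i j := by
  set T : Finset (ℤ × ℤ) :=
    insert (i, j) (Finset.Icc i (j + M) ×ˢ Finset.Icc (i - M) j) with hT
  have key : ∀ i' j' : ℤ, i ≤ i' → i' ≤ i + 1 → j - 1 ≤ j' → j' ≤ j →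
      sigmaOrdZ A i' j' = ∑ p ∈ T, if i' ≤ p.1 ∧ p.2 ≤ j' then A p.1 p.2 else 0 := by
    intro i' j' h1 h2 h3 h4
    have hij' : ¬ i' < j' := by omega
    rw [sigmaOrdZ, if_neg hij']
    refine finsum_cond_eq_sum (fun p => A p.1 p.2) _ T ?_
    rintro ⟨s, t⟩ ⟨hs, ht⟩ hne
    have hb := hband s t hne
    rw [abs_le] at hb
    simp only [hT, Finset.mem_insert, Finset.mem_product, Finset.mem_Icc]
    right
    constructor <;> constructor <;> omega
  rw [key i j (by omega) (by omega) (by omega) (by omega),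
      key (i+1) j (by omega) (by omega) (by omega) (by omega),
      key i (j-1) (by omega) (by omega) (by omega) (by omega),
      key (i+1) (j-1) (by omega) (by omega) (by omega) (by omega),
      ← Finset.sum_sub_distrib, ← Finset.sum_sub_distrib, ← Finset.sum_add_distrib]
  have hpt : ∀ p ∈ T,
      ((if i ≤ p.1 ∧ p.2 ≤ j then A p.1 p.2 else 0) -
        (if i + 1 ≤ p.1 ∧ p.2 ≤ j then A p.1 p.2 else 0) -
        (if i ≤ p.1 ∧ p.2 ≤ j - 1 then A p.1 p.2 else 0) +
        (if i + 1 ≤ p.1 ∧ p.2 ≤ j - 1 then A p.1 p.2 else 0)) =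
      if p = (i, j) then A p.1 p.2 else 0 := by
    rintro ⟨s, t⟩ -
    simp only [Prod.mk.injEq]
    split_ifs <;> omega
  rw [Finset.sum_congr rfl hpt, Finset.sum_ite_eq' T (i, j) (fun p => A p.1 p.2),
      if_pos (hT ▸ Finset.mem_insert_self _ _)]


/-- the relation `⊑` is a partial order on `Θ̃_Δ(n)`; in particular
it is reflexive, transitive, and antisymmetric. -/
theorem sqLE_partialOrder (n : ℕ) (hn : 1 ≤ n) :
    (∀ A ∈ ThetaTSet n, sqLE A A) ∧
    (∀ A B C : ℤ → ℤ → ℤ, A ∈ ThetaTSet n → B ∈ ThetaTSet n → C ∈ ThetaTSet n →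
      sqLE C B → sqLE B A → sqLE C A) ∧
    (∀ A B : ℤ → ℤ → ℤ, A ∈ ThetaTSet n → B ∈ ThetaTSet n →
      sqLE B A → sqLE A B → A = B) := by
  refine ⟨fun A _ => ⟨fun i j _ => le_rfl, rfl, rfl⟩,
    fun A B C _ _ _ h1 h2 => ⟨fun i j hij => (h1.1 i j hij).trans (h2.1 i j hij),
      h1.2.1.trans h2.2.1, h1.2.2.trans h2.2.2⟩, ?_⟩
  intro A B hA hB hBA hAB
  obtain ⟨MA, hMA0, hbandA⟩ := band_bound hn hA
  obtain ⟨MB, hMB0, hbandB⟩ := band_bound hn hB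
  have hσ : ∀ i j : ℤ, i ≠ j → sigmaOrdZ A i j = sigmaOrdZ B i j := fun i j hij =>
    le_antisymm (hAB.1 i j hij) (hBA.1 i j hij)
  have hoff : ∀ i j : ℤ, i ≠ j → A i j = B i j := by
    intro i j hij
    rcases lt_or_gt_of_ne hij with h | h
    · have e1 := extract_lt A MA i j hbandA h
      have e2 := extract_lt B MB i j hbandB h
      have q1 := hσ i j (by omega)
      have q2 := hσ (i-1) j (by omega)
      have q3 := hσ i (j+1) (by omega)
      have q4 := hσ (i-1) (j+1) (by omega)
      omega
    · have e1 := extract_gt A MA i j hbandA h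
      have e2 := extract_gt B MB i j hbandB h
      have q1 := hσ i j (by omega)
      have q2 := hσ (i+1) j (by omega)
      have q3 := hσ i (j-1) (by omega)
      have q4 := hσ (i+1) (j-1) (by omega)
      omega
  funext i j
  by_cases hij : i = j
  · subst hij
    have hrA := hA.2.2.1 i
    have hrB := hB.2.2.1 i
    set T : Finset ℤ := insert i (hrA.toFinset ∪ hrB.toFinset) with hT
    have hiT : i ∈ T := Finset.mem_insert_self _ _
    have eA : roMZ A i = ∑ j ∈ T, A i j := by
      refine finsum_eq_sum_of_support_subset _ ?_
      intro j hj
      simp only [Function.mem_support] at hj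
      simp [hT, Set.Finite.mem_toFinset]
      tauto
    have eB : roMZ B i = ∑ j ∈ T, B i j := by
      refine finsum_eq_sum_of_support_subset _ ?_
      intro j hj
      simp only [Function.mem_support] at hj
      simp [hT, Set.Finite.mem_toFinset]
      tauto
    have hro : roMZ A i = roMZ B i := by rw [hAB.2.1]
    rw [eA, eB] at hro
    rw [← Finset.add_sum_erase T (A i) hiT, ← Finset.add_sum_erase T (B i) hiT] at hro
    have htail : ∑ j ∈ T.erase i, A i j = ∑ j ∈ T.erase i, B i j := by
      refine Finset.sum_congr rfl fun j hj => ?_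
      exact hoff i j (Ne.symm (Finset.ne_of_mem_erase hj))
    omega
  · exact hoff i j hij
end
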